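/- arXiv:1312.0255 — 14 statements merged into one kernel-verified Lean document; each statement's English description precedes it below -/
import Mathlib

section
/- Let q be a real number with 0 < q < 1, let h be an integer with h ≥ 1, let x be a real number, and let n be a natural number. Then the series Σ_{l=0}^∞ (-1)^l q^{hl} [x+l]_q^n is summable and G_{n+1}^{(h)}(x|q)/(n+1) = (1+q) · Σ_{l=0}^∞ (-1)^l q^{hl} [x+l]_q^n. -/
/-- The q-analogue of a real number `x`: `[x]_q = (1 - q^x)/(1 - q)`,
where `q^x` is a real power of the positive base `q`. -/
noncomputable def qnum (q x : ℝ) : ℝ := (1 - q ^ x) / (1 - q)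

/-- The (h,q)-Genocchi polynomial `G_m^{(h)}(x|q)`: `G_0^{(h)}(x|q) = 0` and for `m ≥ 1`,
`G_m^{(h)}(x|q) = m (1+q)/(1-q)^{m-1} ∑_{k=0}^{m-1} C(m-1,k) (-1)^k q^{kx}/(1+q^{h+k})`,
with real powers of the positive base `q`. -/
noncomputable def hqGenocchi (h : ℤ) (q : ℝ) (m : ℕ) (x : ℝ) : ℝ :=
  if m = 0 then 0
  else (m : ℝ) * (1 + q) / (1 - q) ^ (m - 1) *
    ∑ k ∈ Finset.range m, ((m - 1).choose k : ℝ) * (-1 : ℝ) ^ k *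
      q ^ ((k : ℝ) * x) / (1 + q ^ ((h : ℝ) + (k : ℝ)))

theorem statement0 (q : ℝ) (hq0 : 0 < q) (hq1 : q < 1) (h : ℤ) (hh : 1 ≤ h)
    (x : ℝ) (n : ℕ) :
    Summable (fun l : ℕ => (-1 : ℝ) ^ l * q ^ ((h : ℝ) * (l : ℝ)) * (qnum q (x + l)) ^ n) ∧
    hqGenocchi h q (n + 1) x / (n + 1) =
      (1 + q) * ∑' l : ℕ, (-1 : ℝ) ^ l * q ^ ((h : ℝ) * (l : ℝ)) * (qnum q (x + l)) ^ n := by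
  have h1q : (0:ℝ) < 1 - q := by linarith
  -- the geometric ratios
  set s : ℕ → ℝ := fun k => q ^ ((h : ℝ) + (k : ℝ)) with hs
  have hspos : ∀ k : ℕ, 0 < s k := fun k => Real.rpow_pos_of_pos hq0 _
  have hslt : ∀ k : ℕ, s k < 1 := by
    intro k
    apply Real.rpow_lt_one hq0.le hq1
    have h1 : (1:ℝ) ≤ (h:ℝ) := by exact_mod_cast hh
    have h2 : (0:ℝ) ≤ (k:ℝ) := Nat.cast_nonneg k
    linarith
  have hnorm : ∀ k : ℕ, ‖(-(s k))‖ < 1 := by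
    intro k
    rw [norm_neg, Real.norm_eq_abs, abs_of_pos (hspos k)]
    exact hslt k
  -- coefficients
  set c : ℕ → ℝ := fun k => (n.choose k : ℝ) * (-1 : ℝ) ^ k * q ^ ((k : ℝ) * x) / (1 - q) ^ n
    with hc
  -- termwise expansion
  have key : ∀ l : ℕ,
      (-1 : ℝ) ^ l * q ^ ((h : ℝ) * (l : ℝ)) * (qnum q (x + l)) ^ n
      = ∑ k ∈ Finset.range (n + 1), c k * (-(s k)) ^ l := by
    intro l
    have hq' : (0:ℝ) ≤ q := hq0.le
    have expand : (qnum q (x + l)) ^ n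
        = (∑ k ∈ Finset.range (n + 1),
            (-(q ^ ((x : ℝ) + l))) ^ k * (n.choose k : ℝ)) / (1 - q) ^ n := by
      rw [qnum, div_pow, sub_eq_add_neg, add_comm, add_pow]
      simp
    rw [expand]
    rw [Finset.sum_div, Finset.mul_sum]
    apply Finset.sum_congr rfl
    intro k hk
    have e1 : (-(q ^ ((x : ℝ) + l))) ^ k = (-1:ℝ)^k * q ^ (((x:ℝ) + l) * k) := by
      rw [neg_pow, ← Real.rpow_natCast (q ^ ((x:ℝ)+l)) k, ← Real.rpow_mul hq']
    have e2 : (-(s k)) ^ l = (-1:ℝ)^l * q ^ (((h:ℝ) + k) * l) := by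
      rw [neg_pow, ← Real.rpow_natCast (q ^ ((h:ℝ)+k)) l, ← Real.rpow_mul hq']
    rw [e1, e2, hc]
    have e3 : q ^ (((x:ℝ) + l) * k) = q ^ ((k:ℝ) * x) * q ^ ((l:ℝ) * k) := by
      rw [← Real.rpow_add hq0]; ring_nf
    have e4 : q ^ (((h:ℝ) + k) * l) = q ^ ((h:ℝ) * l) * q ^ ((l:ℝ) * k) := by
      rw [← Real.rpow_add hq0]; ring_nf
    rw [e3, e4]
    ring
  have hsum : ∀ k ∈ Finset.range (n + 1), Summable (fun l : ℕ => c k * (-(s k)) ^ l) :=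
    fun k _ => (summable_geometric_of_norm_lt_one (hnorm k)).mul_left _
  have S : Summable (fun l : ℕ =>
      (-1 : ℝ) ^ l * q ^ ((h : ℝ) * (l : ℝ)) * (qnum q (x + l)) ^ n) := by
    rw [show (fun l : ℕ => (-1 : ℝ) ^ l * q ^ ((h : ℝ) * (l : ℝ)) * (qnum q (x + l)) ^ n)
        = fun l => ∑ k ∈ Finset.range (n + 1), c k * (-(s k)) ^ l from funext key]
    exact summable_sum hsum
  refine ⟨S, ?_⟩
  have T : ∑' l : ℕ, (-1 : ℝ) ^ l * q ^ ((h : ℝ) * (l : ℝ)) * (qnum q (x + l)) ^ n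
      = ∑ k ∈ Finset.range (n + 1), c k * (1 + s k)⁻¹ := by
    calc ∑' l : ℕ, (-1 : ℝ) ^ l * q ^ ((h : ℝ) * (l : ℝ)) * (qnum q (x + l)) ^ n
        = ∑' l : ℕ, ∑ k ∈ Finset.range (n + 1), c k * (-(s k)) ^ l := by
          exact tsum_congr key
      _ = ∑ k ∈ Finset.range (n + 1), ∑' l : ℕ, c k * (-(s k)) ^ l := Summable.tsum_finsetSum hsum
      _ = ∑ k ∈ Finset.range (n + 1), c k * (1 + s k)⁻¹ := by
          apply Finset.sum_congr rfl
          intro k _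
          rw [tsum_mul_left, tsum_geometric_of_norm_lt_one (hnorm k), sub_neg_eq_add]
  rw [T, hqGenocchi]
  simp only [Nat.add_eq_zero, one_ne_zero, and_false, if_false, Nat.add_sub_cancel]
  rw [Finset.mul_sum, Finset.sum_div, Finset.mul_sum]
  apply Finset.sum_congr rfl
  intro k _
  rw [hc]
  have hden : (1 + s k) ≠ 0 := by positivity
  have h1qn : ((1:ℝ) - q) ^ n ≠ 0 := by positivity
  have hn1 : ((n:ℝ) + 1) ≠ 0 := by positivity
  field_simp
  simp only [hs]
  push_cast
  ring
end

section
/- Let q be a real number with q > 0 and q ≠ 1, let h be an integer with h ≥ 1, let x be a real number, and let n be a natural number. Then G_n^{(h)}(x|q) = Σ_{k=0}^{n} binom(n,k) · q^{(k-1)x} · G_k^{(h)}(q) · [x]_q^{n-k}. -/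
/-- Key combinatorial identity:
`∑_{k} k C(N+1,k) C(k-1,j) t^k (1-t)^{N+1-k} = (N+1) C(N,j) t^{j+1}`. -/
lemma key_sum (N j : ℕ) (hj : j ≤ N) (t : ℝ) :
    ∑ k ∈ Finset.range (N + 2),
        (k : ℝ) * ((N + 1).choose k : ℝ) * (((k - 1).choose j : ℕ) : ℝ) *
          (t ^ k * (1 - t) ^ (N + 1 - k))
      = ((N : ℝ) + 1) * (N.choose j : ℝ) * t ^ (j + 1) := by
  rw [Finset.sum_range_succ']
  simp only [Nat.cast_zero, zero_mul, add_zero]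
  have hterm : ∀ m : ℕ,
      ((m + 1 : ℕ) : ℝ) * ((N + 1).choose (m + 1) : ℝ) * ((m + 1 - 1).choose j : ℝ) *
        (t ^ (m + 1) * (1 - t) ^ (N + 1 - (m + 1)))
      = ((N : ℝ) + 1) * ((N.choose m * m.choose j : ℕ) : ℝ) *
        (t ^ (m + 1) * (1 - t) ^ (N - m)) := by
    intro m
    have h1 : (N + 1) * N.choose m = (N + 1).choose (m + 1) * (m + 1) :=
      Nat.add_one_mul_choose_eq N m
    have h2 : ((N : ℝ) + 1) * (N.choose m : ℝ)
        = ((N + 1).choose (m + 1) : ℝ) * ((m : ℝ) + 1) := by exact_mod_cast h1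
    simp only [Nat.add_sub_cancel, Nat.succ_sub_succ, Nat.sub_zero]
    push_cast
    linear_combination ((m.choose j : ℝ) * (t ^ (m + 1) * (1 - t) ^ (N - m))) * h2.symm
  rw [Finset.sum_congr rfl fun m _ => hterm m]
  -- now split off m < j
  have hsplit : Finset.range (N + 1) = Finset.Ico 0 j ∪ Finset.Ico j (N + 1) := by
    rw [Finset.range_eq_Ico, Finset.Ico_union_Ico_eq_Ico (Nat.zero_le j) (by omega)]
  rw [hsplit, Finset.sum_union (by
    simp [Finset.disjoint_left]
    intro a ha hja; omega)]
  have hzero : ∑ m ∈ Finset.Ico 0 j,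
      ((N : ℝ) + 1) * ((N.choose m * m.choose j : ℕ) : ℝ) *
        (t ^ (m + 1) * (1 - t) ^ (N - m)) = 0 := by
    apply Finset.sum_eq_zero
    intro m hm
    simp only [Finset.mem_Ico] at hm
    rw [Nat.choose_eq_zero_of_lt hm.2]
    simp
  rw [hzero, zero_add, Finset.sum_Ico_eq_sum_range]
  have hre : ∀ i ∈ Finset.range (N + 1 - j),
      ((N : ℝ) + 1) * ((N.choose (j + i) * (j + i).choose j : ℕ) : ℝ) *
        (t ^ (j + i + 1) * (1 - t) ^ (N - (j + i)))
      = ((N : ℝ) + 1) * (N.choose j : ℝ) * t ^ (j + 1) *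
        ((t ^ i * (1 - t) ^ (N - j - i)) * ((N - j).choose i : ℝ)) := by
    intro i hi
    simp only [Finset.mem_range] at hi
    have hjiN : j + i ≤ N := by omega
    rw [Nat.choose_mul (n := N) (Nat.le_add_right j i)]
    have : j + i - j = i := by omega
    rw [this]
    have : N - (j + i) = N - j - i := by omega
    rw [this]
    push_cast
    ring
  rw [Finset.sum_congr rfl hre, ← Finset.mul_sum]
  have hb : ∑ i ∈ Finset.range (N + 1 - j),
      t ^ i * (1 - t) ^ (N - j - i) * ((N - j).choose i : ℝ) = 1 := by
    have := add_pow t (1 - t) (N - j)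
    rw [show t + (1 - t) = 1 by ring, one_pow] at this
    rw [show N + 1 - j = (N - j) + 1 by omega]
    exact this.symm
  rw [hb, mul_one]

theorem statement1 (q : ℝ) (hq0 : 0 < q) (hq1 : q ≠ 1) (h : ℤ) (hh : 1 ≤ h)
    (x : ℝ) (n : ℕ) :
    hqGenocchi h q n x =
      ∑ k ∈ Finset.range (n + 1), (n.choose k : ℝ) * q ^ (((k : ℝ) - 1) * x) *
        hqGenocchi h q k 0 * (qnum q x) ^ (n - k) := by
  obtain ⟨N, rfl⟩ | rfl : (∃ N, n = N + 1) ∨ n = 0 := by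
    rcases n with _ | N
    · exact Or.inr rfl
    · exact Or.inl ⟨N, rfl⟩
  swap
  · simp [hqGenocchi]
  set t : ℝ := q ^ x with ht
  have ht0 : 0 < t := Real.rpow_pos_of_pos hq0 x
  have htne : t ≠ 0 := ne_of_gt ht0
  have hq1' : (1 : ℝ) - q ≠ 0 := by
    intro hc; apply hq1; linarith
  have hD : ∀ j : ℕ, (1 : ℝ) + q ^ ((h : ℝ) + (j : ℝ)) ≠ 0 := by
    intro j
    have : (0 : ℝ) < q ^ ((h : ℝ) + (j : ℝ)) := Real.rpow_pos_of_pos hq0 _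
    linarith
  have hpowjx : ∀ j : ℕ, q ^ ((j : ℝ) * x) = t ^ j := by
    intro j
    rw [mul_comm, Real.rpow_mul hq0.le, ht, Real.rpow_natCast]
  have hpowk1 : ∀ k : ℕ, q ^ (((k : ℝ) - 1) * x) = t ^ k / t := by
    intro k
    rw [sub_mul, one_mul, Real.rpow_sub hq0, hpowjx k]
  have hqnum : qnum q x = (1 - t) / (1 - q) := rfl
  set n := N + 1 with hn
  -- rewrite each RHS term as a sum over j ∈ range n
  have hterm : ∀ k ∈ Finset.range (n + 1),
      (n.choose k : ℝ) * q ^ (((k : ℝ) - 1) * x) * hqGenocchi h q k 0 * (qnum q x) ^ (n - k)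
      = ∑ j ∈ Finset.range n,
          ((1 + q) / (1 - q) ^ (n - 1) * ((-1 : ℝ) ^ j / (1 + q ^ ((h : ℝ) + (j : ℝ)))) / t) *
            ((k : ℝ) * (n.choose k : ℝ) * (((k - 1).choose j : ℕ) : ℝ) *
              (t ^ k * (1 - t) ^ (n - k))) := by
    intro k hk
    simp only [Finset.mem_range] at hk
    rcases Nat.eq_zero_or_pos k with hk0 | hk1
    · subst hk0
      simp [hqGenocchi]
    · have hkn : k ≤ n := by omega
      rw [hqnum, hpowk1, hqGenocchi]
      rw [if_neg (by omega)]
      -- extend inner sum from range k to range n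
      have hext : ∑ j ∈ Finset.range k, ((k - 1).choose j : ℝ) * (-1 : ℝ) ^ j *
            q ^ ((j : ℝ) * 0) / (1 + q ^ ((h : ℝ) + (j : ℝ)))
          = ∑ j ∈ Finset.range n, ((k - 1).choose j : ℝ) * (-1 : ℝ) ^ j *
            q ^ ((j : ℝ) * 0) / (1 + q ^ ((h : ℝ) + (j : ℝ))) := by
        apply Finset.sum_subset (Finset.range_subset_range.2 hkn)
        intro j _ hj
        simp only [Finset.mem_range, not_lt] at hj
        rw [Nat.choose_eq_zero_of_lt (by omega)]
        simp
      rw [hext, Finset.mul_sum, Finset.mul_sum, Finset.sum_mul]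
      apply Finset.sum_congr rfl
      intro j _
      simp only [mul_zero, Real.rpow_zero]
      rw [div_pow]
      have hpq : (1 - q) ^ (n - 1) = (1 - q) ^ (k - 1) * (1 - q) ^ (n - k) := by
        rw [← pow_add]
        congr 1
        omega
      field_simp
      rw [hpq]
      ring
  rw [Finset.sum_congr rfl hterm, Finset.sum_comm]
  -- now sum over j of constant * key_sum
  rw [hqGenocchi, if_neg (by omega)]
  rw [Finset.mul_sum]
  apply Finset.sum_congr rfl
  intro j hj
  simp only [Finset.mem_range] at hj
  rw [← Finset.mul_sum]
  have hk := key_sum N j (by omega) t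
  rw [show n + 1 = N + 2 from rfl, hk]
  rw [hpowjx j]
  have hDj := hD j
  rw [show n - 1 = N from rfl]
  field_simp
  push_cast
  rw [hn]
  push_cast
  ring
end

section
/- Let q be a real number with q > 0 and q ≠ 1, let h be an integer with h ≥ 1, let x be a real number, and let n be a natural number. Then G_{n+1}^{(h)}(1-x | q^{-1}) = (-1)^n · q^{h+n-1} · G_{n+1}^{(h)}(x | q). -/
theorem statement2 (q : ℝ) (hq0 : 0 < q) (hq1 : q ≠ 1) (h : ℤ) (hh : 1 ≤ h)
    (x : ℝ) (n : ℕ) :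
    hqGenocchi h q⁻¹ (n + 1) (1 - x) =
      (-1 : ℝ) ^ n * q ^ ((h : ℝ) + (n : ℝ) - 1) * hqGenocchi h q (n + 1) x := by
  have hq0' : q ≠ 0 := ne_of_gt hq0
  have h1q : (1 : ℝ) - q ≠ 0 := sub_ne_zero.mpr (fun e => hq1 e.symm)
  simp only [hqGenocchi, Nat.succ_ne_zero, if_false, Nat.add_sub_cancel]
  -- per-term identity
  have hterm : ∀ k ∈ Finset.range (n + 1),
      ((n.choose k : ℝ)) * (-1 : ℝ) ^ k * q⁻¹ ^ ((k : ℝ) * (1 - x)) /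
          (1 + q⁻¹ ^ ((h : ℝ) + (k : ℝ)))
        = q ^ (h : ℝ) * (((n.choose k : ℝ)) * (-1 : ℝ) ^ k * q ^ ((k : ℝ) * x) /
          (1 + q ^ ((h : ℝ) + (k : ℝ)))) := by
    intro k _
    have hinv : ∀ y : ℝ, q⁻¹ ^ y = q ^ (-y) := by
      intro y
      rw [Real.inv_rpow hq0.le, ← Real.rpow_neg hq0.le]
    rw [hinv, hinv]
    have key : q ^ (-((k : ℝ) * (1 - x))) / (1 + q ^ (-((h : ℝ) + (k : ℝ))))
        = q ^ (h : ℝ) * (q ^ ((k : ℝ) * x) / (1 + q ^ ((h : ℝ) + (k : ℝ)))) := by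
      have hp1 : (0 : ℝ) < 1 + q ^ (-((h : ℝ) + (k : ℝ))) := by positivity
      have hp2 : (0 : ℝ) < 1 + q ^ ((h : ℝ) + (k : ℝ)) := by positivity
      rw [mul_div_assoc', div_eq_div_iff (ne_of_gt hp1) (ne_of_gt hp2)]
      rw [mul_add, mul_add, mul_one, mul_one, ← Real.rpow_add hq0, ← Real.rpow_add hq0, ← Real.rpow_add hq0]
      rw [show -((k : ℝ) * (1 - x)) = (k : ℝ) * x - k by ring,
        show (k : ℝ) * x - k + ((h : ℝ) + k) = (h : ℝ) + (k : ℝ) * x by ring,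
        show (h : ℝ) + (k : ℝ) * x + -((h : ℝ) + k) = (k : ℝ) * x - k by ring,
        add_comm]
    calc ((n.choose k : ℝ)) * (-1 : ℝ) ^ k * q ^ (-((k : ℝ) * (1 - x))) /
          (1 + q ^ (-((h : ℝ) + (k : ℝ))))
        = ((n.choose k : ℝ)) * (-1 : ℝ) ^ k *
            (q ^ (-((k : ℝ) * (1 - x))) / (1 + q ^ (-((h : ℝ) + (k : ℝ))))) := by ring
      _ = ((n.choose k : ℝ)) * (-1 : ℝ) ^ k *
            (q ^ (h : ℝ) * (q ^ ((k : ℝ) * x) / (1 + q ^ ((h : ℝ) + (k : ℝ))))) := by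
            rw [key]
      _ = _ := by ring
  rw [Finset.sum_congr rfl hterm, ← Finset.mul_sum]
  -- coefficient identity
  have hrw : q ^ ((h : ℝ) + (n : ℝ) - 1) = q ^ (h : ℝ) * q ^ n / q := by
    rw [show (h : ℝ) + (n : ℝ) - 1 = (h : ℝ) + ((n : ℝ) + (-1)) by ring,
      Real.rpow_add hq0, Real.rpow_add hq0, Real.rpow_neg_one, Real.rpow_natCast]
    ring
  rw [hrw]
  set S : ℝ := ∑ k ∈ Finset.range (n + 1), ((n.choose k : ℝ)) * (-1 : ℝ) ^ k *
      q ^ ((k : ℝ) * x) / (1 + q ^ ((h : ℝ) + (k : ℝ))) with hS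
  have hc : ((n : ℝ) + 1) * (1 + q⁻¹) / (1 - q⁻¹) ^ n * q ^ (h : ℝ)
      = (-1 : ℝ) ^ n * (q ^ (h : ℝ) * q ^ n / q) * (((n : ℝ) + 1) * (1 + q) / (1 - q) ^ n) := by
    have h1qi : (1 : ℝ) - q⁻¹ = -(1 - q) / q := by field_simp; ring
    rw [h1qi, div_pow, neg_pow]
    field_simp
    ring_nf
    rw [show n * 2 = 2 * n from Nat.mul_comm n 2, pow_mul]
    norm_num
    ring
  push_cast
  calc ((n : ℝ) + 1) * (1 + q⁻¹) / (1 - q⁻¹) ^ n * (q ^ (h : ℝ) * S)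
      = ((n : ℝ) + 1) * (1 + q⁻¹) / (1 - q⁻¹) ^ n * q ^ (h : ℝ) * S := by ring
    _ = (-1 : ℝ) ^ n * (q ^ (h : ℝ) * q ^ n / q) * (((n : ℝ) + 1) * (1 + q) / (1 - q) ^ n) * S := by
        rw [hc]
    _ = _ := by ring
end

section
/- Let q be a real number with q > 0 and q ≠ 1, let h be an integer with h ≥ 1, and let n be a natural number. Then q^{h-1} · Σ_{k=0}^{n} binom(n,k) · q^{k} · G_k^{(h)}(q) + G_n^{(h)}(q) equals 1+q if n = 1, and equals 0 if n ≠ 1. -/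
open Finset in

lemma lemB (q : ℝ) (a : ℕ → ℝ) (n : ℕ) :
    ∑ k ∈ Finset.range (n+1), ((n.choose k : ℝ) * q^k * (k:ℝ) * (1-q)^(n-k) *
        ∑ j ∈ Finset.range k, ((k-1).choose j : ℝ) * (-1)^j * a j)
      = (n:ℝ) * ∑ j ∈ Finset.range n, ((n-1).choose j : ℝ) * (-1)^j * (q^(j+1) * a j) := by
  have key : ∀ j < n, ∑ k ∈ Finset.Ico (j+1) (n+1),
      ((n.choose k : ℝ) * q^k * (k:ℝ) * (1-q)^(n-k) * (((k-1).choose j : ℝ) * (-1)^j * a j))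
      = (n:ℝ) * (((n-1).choose j : ℝ) * (-1)^j * (q^(j+1) * a j)) := by
    intro j hj
    rw [Finset.sum_Ico_eq_sum_range]
    have hnj : n + 1 - (j+1) = (n-1-j) + 1 := by omega
    rw [hnj]
    have hterm : ∀ i ∈ Finset.range ((n-1-j)+1),
        ((n.choose (j+1+i) : ℝ) * q^(j+1+i) * ((j+1+i:ℕ):ℝ) * (1-q)^(n-(j+1+i)) *
          (((j+1+i-1).choose j : ℝ) * (-1)^j * a j))
        = ((n:ℝ) * (((n-1).choose j : ℝ) * (-1)^j * (q^(j+1) * a j))) *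
          (q^i * (1-q)^((n-1-j)-i) * ((n-1-j).choose i : ℝ)) := by
      intro i hi
      have hi' : i ≤ n-1-j := Finset.mem_range_succ_iff.mp hi
      have h1 : n.choose (j+1+i) * (j+1+i) = n * ((n-1).choose (j+i)) := by
        have := Nat.add_one_mul_choose_eq (n-1) (j+i)
        have hn1 : n - 1 + 1 = n := by omega
        have hk1 : j + i + 1 = j + 1 + i := by omega
        try simp only [Nat.succ_eq_add_one] at this
        rw [hn1, hk1] at this
        omega
      have h2 : (n-1).choose (j+i) * ((j+i).choose j) = (n-1).choose j * ((n-1-j).choose i) := by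
        have := Nat.choose_mul (n := n-1) (k := j+i) (s := j) (by omega)
        simpa [Nat.add_sub_cancel_left, show n - 1 - j = n - 1 - j from rfl] using this
      have h3 : j + 1 + i - 1 = j + i := by omega
      have h4 : n - (j+1+i) = n - 1 - j - i := by omega
      rw [h3, h4]
      have hcast : (n.choose (j+1+i) : ℝ) * ((j+1+i : ℕ) : ℝ) * ((j+i).choose j : ℝ)
          = (n : ℝ) * ((n-1).choose j : ℝ) * ((n-1-j).choose i : ℝ) := by
        push_cast [← Nat.cast_mul]
        exact_mod_cast congrArg (Nat.cast (R := ℝ)) (by rw [h1, Nat.mul_assoc, h2, ← Nat.mul_assoc])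
      have hq : q^(j+1+i) = q^(j+1) * q^i := by rw [pow_add]
      rw [hq]
      linear_combination (q^(j+1)*q^i*(1-q)^(n-1-j-i)*(-1:ℝ)^j*(a j)) * hcast
    rw [Finset.sum_congr rfl hterm, ← Finset.mul_sum]
    have : ∑ i ∈ Finset.range ((n-1-j)+1), q^i * (1-q)^((n-1-j)-i) * ((n-1-j).choose i : ℝ)
        = (q + (1-q))^(n-1-j) := (add_pow q (1-q) (n-1-j)).symm
    rw [this]
    simp
  -- swap
  simp_rw [Finset.mul_sum]
  have hswap := (Finset.sum_Ico_Ico_comm' 0 (n+1)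
    (fun j k => (n.choose k : ℝ) * q^k * (k:ℝ) * (1-q)^(n-k) * (((k-1).choose j : ℝ) * (-1)^j * a j))).symm
  simp only [← Finset.range_eq_Ico] at hswap
  rw [hswap, Finset.sum_range_succ]
  simp only [Finset.Ico_self, Finset.sum_empty, add_zero]
  rw [Finset.sum_congr rfl (fun j hj => key j (Finset.mem_range.mp hj))]

theorem statement3 (q : ℝ) (hq0 : 0 < q) (hq1 : q ≠ 1) (h : ℤ) (hh : 1 ≤ h) (n : ℕ) :
    q ^ ((h : ℝ) - 1) *
        (∑ k ∈ Finset.range (n + 1), (n.choose k : ℝ) * q ^ k * hqGenocchi h q k 0) +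
      hqGenocchi h q n 0 = if n = 1 then 1 + q else 0 := by
  rcases Nat.eq_zero_or_pos n with hn | hn
  · subst hn; simp [hqGenocchi]
  have hq1' : (1:ℝ) - q ≠ 0 := sub_ne_zero.mpr (Ne.symm hq1)
  have hP : ((1:ℝ)-q)^(n-1) ≠ 0 := pow_ne_zero _ hq1'
  apply mul_right_cancel₀ hP
  set a : ℕ → ℝ := fun j => (1 + q ^ ((h:ℝ) + (j:ℝ)))⁻¹ with ha
  have hden : ∀ j : ℕ, (1:ℝ) + q ^ ((h:ℝ) + (j:ℝ)) ≠ 0 := fun j => by positivity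
  have hGen : ∀ k : ℕ, hqGenocchi h q k 0
      = if k = 0 then 0 else (k:ℝ) * (1+q) / (1-q)^(k-1) *
          ∑ j ∈ Finset.range k, ((k-1).choose j : ℝ) * (-1)^j * a j := by
    intro k
    rw [hqGenocchi]
    rcases eq_or_ne k 0 with rfl | hk
    · simp
    rw [if_neg hk, if_neg hk]
    congr 1
    refine Finset.sum_congr rfl fun j _ => ?_
    rw [mul_zero, Real.rpow_zero, mul_one, div_eq_mul_inv]
  have hterm : ∀ k ∈ Finset.range (n+1),
      ((n.choose k : ℝ) * q ^ k * hqGenocchi h q k 0) * (1-q)^(n-1)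
      = (1+q) * ((n.choose k : ℝ) * q^k * (k:ℝ) * (1-q)^(n-k) *
          ∑ j ∈ Finset.range k, ((k-1).choose j : ℝ) * (-1)^j * a j) := by
    intro k hk
    rcases eq_or_ne k 0 with rfl | hk0
    · simp [hGen]
    have hkn : k ≤ n := by
      have := Finset.mem_range.mp hk; omega
    have hsplit : ((1:ℝ)-q)^(n-1) = (1-q)^(k-1) * (1-q)^(n-k) := by
      rw [← pow_add]; congr 1; omega
    rw [hGen, if_neg hk0, hsplit]
    have hk1 : ((1:ℝ)-q)^(k-1) ≠ 0 := pow_ne_zero _ hq1'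
    field_simp
  rw [add_mul, mul_assoc, Finset.sum_mul, Finset.sum_congr rfl hterm, ← Finset.mul_sum,
    lemB q a n, hGen n, if_neg (by omega)]
  have hG : ((n:ℝ) * (1+q) / (1-q)^(n-1) * ∑ j ∈ Finset.range n, ((n-1).choose j : ℝ) * (-1)^j * a j) * (1-q)^(n-1)
      = (n:ℝ) * (1+q) * ∑ j ∈ Finset.range n, ((n-1).choose j : ℝ) * (-1)^j * a j := by
    field_simp
  rw [hG]
  have hsum : q ^ ((h:ℝ)-1) * (∑ j ∈ Finset.range n, ((n-1).choose j:ℝ)*(-1)^j*(q^(j+1)*a j))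
      + ∑ j ∈ Finset.range n, ((n-1).choose j:ℝ)*(-1)^j*a j
      = ∑ j ∈ Finset.range n, ((n-1).choose j:ℝ)*(-1)^j := by
    rw [Finset.mul_sum, ← Finset.sum_add_distrib]
    refine Finset.sum_congr rfl fun j _ => ?_
    have hr : q ^ ((h:ℝ)-1) * q ^ (j+1:ℕ) = q ^ ((h:ℝ)+(j:ℝ)) := by
      rw [← Real.rpow_natCast q (j+1), ← Real.rpow_add hq0]
      congr 1; push_cast; ring
    have hd := hden j
    calc q^((h:ℝ)-1)*(((n-1).choose j:ℝ)*(-1)^j*(q^(j+1)* a j)) + ((n-1).choose j:ℝ)*(-1)^j * a j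
        = ((n-1).choose j:ℝ)*(-1)^j * ((q^((h:ℝ)-1) * q^(j+1:ℕ) + 1) * a j) := by ring
      _ = ((n-1).choose j:ℝ)*(-1)^j * ((q^((h:ℝ)+(j:ℝ)) + 1) * a j) := by rw [hr]
      _ = ((n-1).choose j:ℝ)*(-1)^j := by
          rw [ha]; simp only []
          rw [add_comm (q^((h:ℝ)+(j:ℝ))) 1, mul_inv_cancel₀ hd, mul_one]
  have halt : ∑ j ∈ Finset.range n, ((n-1).choose j : ℝ) * (-1)^j = if n = 1 then 1 else 0 := by
    have hap := add_pow (-1:ℝ) 1 (n-1)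
    rw [show (n-1)+1 = n by omega] at hap
    norm_num at hap
    rw [show (∑ j ∈ Finset.range n, ((n-1).choose j : ℝ) * (-1)^j)
        = ∑ j ∈ Finset.range n, (-1:ℝ)^j * ((n-1).choose j : ℝ) from
      Finset.sum_congr rfl fun j _ => by ring, ← hap, zero_pow_eq]
    congr 1
    simp only [eq_iff_iff]
    omega
  calc q ^ ((h:ℝ)-1) * ((1+q) * ((n:ℝ) * ∑ j ∈ Finset.range n, ((n-1).choose j:ℝ)*(-1)^j*(q^(j+1)*a j)))
      + (n:ℝ) * (1+q) * ∑ j ∈ Finset.range n, ((n-1).choose j:ℝ)*(-1)^j*a j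
      = (n:ℝ)*(1+q) * (q ^ ((h:ℝ)-1) * (∑ j ∈ Finset.range n, ((n-1).choose j:ℝ)*(-1)^j*(q^(j+1)*a j))
        + ∑ j ∈ Finset.range n, ((n-1).choose j:ℝ)*(-1)^j*a j) := by ring
    _ = (n:ℝ)*(1+q) * (if n = 1 then 1 else 0) := by rw [hsum, halt]
    _ = (if n = 1 then 1 + q else 0) * (1-q)^(n-1) := by
        rcases eq_or_ne n 1 with rfl | hne
        · norm_num
        · simp [hne]
end

section
/- Let q be a real number with q > 0 and q ≠ 1, let h be an integer with h ≥ 1, and let n be a natural number with n ≥ 1. Then G_{n+1}^{(h)}(2 | q) = (n+1) · q^{-h} · (1+q) + q^{-2h} · G_{n+1}^{(h)}(q). -/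
theorem statement4 (q : ℝ) (hq0 : 0 < q) (hq1 : q ≠ 1) (h : ℤ) (hh : 1 ≤ h)
    (n : ℕ) (hn : 1 ≤ n) :
    hqGenocchi h q (n + 1) 2 =
      ((n : ℝ) + 1) * q ^ (-(h : ℝ)) * (1 + q) + q ^ (-2 * (h : ℝ)) * hqGenocchi h q (n + 1) 0 := by
  have hd : ∀ k : ℕ, (1 : ℝ) + q ^ ((h : ℝ) + (k : ℝ)) ≠ 0 := by
    intro k
    have := Real.rpow_pos_of_pos hq0 ((h : ℝ) + (k : ℝ))
    positivity
  have h1q : (1 : ℝ) - q ≠ 0 := sub_ne_zero.mpr (Ne.symm hq1)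
  have hpow : ∀ k : ℕ, q ^ ((h : ℝ) + (k : ℝ)) = q ^ (h : ℝ) * q ^ k := fun k => by
    rw [Real.rpow_add hq0, Real.rpow_natCast]
  -- pointwise identity
  have key : ∀ k ∈ Finset.range (n + 1),
      ((n.choose k : ℝ)) * (-1 : ℝ) ^ k * q ^ ((k : ℝ) * 2) / (1 + q ^ ((h : ℝ) + (k : ℝ)))
      = q ^ (-2 * (h : ℝ)) * ((n.choose k : ℝ) * (-1 : ℝ) ^ k * (q ^ ((h : ℝ) + (k : ℝ)) - 1))
        + q ^ (-2 * (h : ℝ)) *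
          ((n.choose k : ℝ) * (-1 : ℝ) ^ k * q ^ ((k : ℝ) * 0) / (1 + q ^ ((h : ℝ) + (k : ℝ)))) := by
    intro k _
    have hdk := hd k
    have hsq : q ^ ((k : ℝ) * 2) = q ^ (-2 * (h : ℝ)) * (q ^ ((h : ℝ) + (k : ℝ))) ^ 2 := by
      rw [← Real.rpow_natCast (q ^ ((h : ℝ) + (k : ℝ))) 2, ← Real.rpow_mul hq0.le,
        ← Real.rpow_add hq0]
      norm_num
      ring_nf
    rw [mul_zero, Real.rpow_zero]
    field_simp
    rw [hsq]
    ring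
  -- the alternating binomial sums
  have hsum1 : ∑ k ∈ Finset.range (n + 1),
      (n.choose k : ℝ) * (-1 : ℝ) ^ k * (q ^ ((h : ℝ) + (k : ℝ)) - 1)
      = q ^ (h : ℝ) * (1 - q) ^ n := by
    have hbin : ((-q) + 1) ^ n = ∑ k ∈ Finset.range (n + 1),
        (-q) ^ k * 1 ^ (n - k) * (n.choose k : ℝ) := add_pow (-q) 1 n
    have hzero : ((-1 : ℝ) + 1) ^ n = ∑ k ∈ Finset.range (n + 1),
        (-1 : ℝ) ^ k * 1 ^ (n - k) * (n.choose k : ℝ) := add_pow (-1 : ℝ) 1 n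
    have hz : (∑ k ∈ Finset.range (n + 1), (-1 : ℝ) ^ k * (n.choose k : ℝ)) = 0 := by
      have : ((-1 : ℝ) + 1) ^ n = 0 := by
        simp [zero_pow (by omega : n ≠ 0)]
      rw [this] at hzero
      simpa using hzero.symm
    simp only [hpow, mul_sub]
    rw [Finset.sum_sub_distrib]
    have h2 : ∑ k ∈ Finset.range (n + 1),
        (n.choose k : ℝ) * (-1 : ℝ) ^ k * (q ^ (h : ℝ) * q ^ k)
        = q ^ (h : ℝ) * ∑ k ∈ Finset.range (n + 1), (-q) ^ k * 1 ^ (n - k) * (n.choose k : ℝ) := by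
      rw [Finset.mul_sum]
      refine Finset.sum_congr rfl fun k _ => ?_
      rw [neg_pow]
      ring
    have h3 : ∑ k ∈ Finset.range (n + 1), (n.choose k : ℝ) * (-1 : ℝ) ^ k * 1
        = ∑ k ∈ Finset.range (n + 1), (-1 : ℝ) ^ k * (n.choose k : ℝ) := by
      refine Finset.sum_congr rfl fun k _ => by ring
    rw [h2, h3, hz, ← hbin]
    ring_nf
  simp only [hqGenocchi, Nat.succ_ne_zero, if_false, Nat.add_sub_cancel]
  rw [Finset.sum_congr rfl key, Finset.sum_add_distrib, ← Finset.mul_sum, ← Finset.mul_sum,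
    hsum1]
  have hne : (1 - q) ^ n ≠ 0 := pow_ne_zero _ h1q
  have e1 : q ^ (-2 * (h : ℝ)) * q ^ (h : ℝ) = q ^ (-(h : ℝ)) := by
    rw [← Real.rpow_add hq0]; congr 1; ring
  rw [mul_add, show q ^ (-2 * (h : ℝ)) * (q ^ (h : ℝ) * (1 - q) ^ n)
      = q ^ (-(h : ℝ)) * (1 - q) ^ n from by rw [← mul_assoc, e1]]
  simp only [mul_zero, Real.rpow_zero]
  push_cast
  field_simp
end

section
/- Let q be a real number with q > 0 and q ≠ 1, let h be an integer with h ≥ 1, and let n be a natural number with n ≥ 1. Then (-1)^n · q^n · G_{n+1}^{(h)}(-1 | q)/(n+1) = (1+q) + q^{h+1} · G_{n+1}^{(h)}(q^{-1})/(n+1). -/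
theorem statement5 (q : ℝ) (hq0 : 0 < q) (hq1 : q ≠ 1) (h : ℤ) (hh : 1 ≤ h)
    (n : ℕ) (hn : 1 ≤ n) :
    (-1 : ℝ) ^ n * q ^ n * hqGenocchi h q (n + 1) (-1) / ((n : ℝ) + 1) =
      (1 + q) + q ^ ((h : ℝ) + 1) * hqGenocchi h q⁻¹ (n + 1) 0 / ((n : ℝ) + 1) := by
  have hq : q ≠ 0 := ne_of_gt hq0
  have h1q : (1 : ℝ) - q ≠ 0 := sub_ne_zero.mpr (Ne.symm hq1)
  have hn1 : ((n : ℝ) + 1) ≠ 0 := by positivity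
  have hrpos : ∀ k : ℕ, 0 < q ^ ((h : ℝ) + (k : ℝ)) :=
    fun k => Real.rpow_pos_of_pos hq0 _
  have hrne : ∀ k : ℕ, (1 : ℝ) + q ^ ((h : ℝ) + (k : ℝ)) ≠ 0 :=
    fun k => by have := hrpos k; positivity
  have hqhpos : (0:ℝ) < q ^ ((h : ℝ)) := Real.rpow_pos_of_pos hq0 _
  set S : ℝ := ∑ k ∈ Finset.range (n + 1),
      (n.choose k : ℝ) * (-1 : ℝ) ^ k *
        (q ^ ((h : ℝ) + (k : ℝ)) / (1 + q ^ ((h : ℝ) + (k : ℝ)))) with hS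
  have binom : ∀ x : ℝ, ∑ k ∈ Finset.range (n + 1), (n.choose k : ℝ) * x ^ k
      = (x + 1) ^ n := by
    intro x
    rw [add_pow]
    refine Finset.sum_congr rfl fun k _ => ?_
    simp [mul_comm]
  -- RHS sum
  have hRsum : ∑ k ∈ Finset.range (n + 1),
      (n.choose k : ℝ) * (-1 : ℝ) ^ k * (q⁻¹) ^ ((k : ℝ) * 0) /
        (1 + (q⁻¹) ^ ((h : ℝ) + (k : ℝ))) = S := by
    refine Finset.sum_congr rfl fun k _ => ?_
    have h1 : (q⁻¹ : ℝ) ^ ((h : ℝ) + (k : ℝ)) = (q ^ ((h : ℝ) + (k : ℝ)))⁻¹ :=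
      Real.inv_rpow hq0.le _
    have h2 : (q⁻¹ : ℝ) ^ ((k : ℝ) * 0) = 1 := by
      rw [mul_zero, Real.rpow_zero]
    rw [h1, h2]
    have hr := hrpos k
    have hrne' := hrne k
    have hx : q ^ ((h : ℝ) + (k : ℝ)) ≠ 0 := ne_of_gt hr
    rw [mul_one, div_eq_mul_inv]
    congr 1
    have hrew : (1 : ℝ) + (q ^ ((h : ℝ) + (k : ℝ)))⁻¹
        = (1 + q ^ ((h : ℝ) + (k : ℝ))) * (q ^ ((h : ℝ) + (k : ℝ)))⁻¹ := by
      rw [add_mul, one_mul, mul_inv_cancel₀ hx, add_comm]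
    rw [hrew, mul_inv, inv_inv, div_eq_mul_inv, mul_comm]
  -- LHS sum
  have hLsum : ∑ k ∈ Finset.range (n + 1),
      (n.choose k : ℝ) * (-1 : ℝ) ^ k * q ^ ((k : ℝ) * (-1)) /
        (1 + q ^ ((h : ℝ) + (k : ℝ)))
      = (1 - q⁻¹) ^ n + q ^ ((h : ℝ)) * S := by
    have step : ∀ k ∈ Finset.range (n + 1),
        (n.choose k : ℝ) * (-1 : ℝ) ^ k * q ^ ((k : ℝ) * (-1)) /
          (1 + q ^ ((h : ℝ) + (k : ℝ)))
        = (n.choose k : ℝ) * (-q⁻¹) ^ k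
          - q ^ ((h : ℝ)) * ((n.choose k : ℝ) * (-1 : ℝ) ^ k)
          + q ^ ((h : ℝ)) * ((n.choose k : ℝ) * (-1 : ℝ) ^ k *
              (q ^ ((h : ℝ) + (k : ℝ)) / (1 + q ^ ((h : ℝ) + (k : ℝ))))) := by
      intro k _
      have hk1 : q ^ ((k : ℝ) * (-1)) = (q ^ k)⁻¹ := by
        rw [mul_neg_one, Real.rpow_neg hq0.le, Real.rpow_natCast]
      have hmul : q ^ ((h : ℝ) + (k : ℝ)) = q ^ ((h : ℝ)) * q ^ k := by
        rw [← Real.rpow_natCast q k, ← Real.rpow_add hq0]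
      have hneg : ((-q⁻¹ : ℝ)) ^ k = (-1 : ℝ) ^ k * (q ^ k)⁻¹ := by
        rw [neg_pow, inv_pow]
        try ring
      have hqk : (q : ℝ) ^ k ≠ 0 := pow_ne_zero _ hq
      have hd : (1 : ℝ) + q ^ ((h : ℝ)) * q ^ k ≠ 0 := by rw [← hmul]; exact hrne k
      rw [hk1, hneg, hmul]
      field_simp
      ring
    rw [Finset.sum_congr rfl step]
    rw [Finset.sum_add_distrib, Finset.sum_sub_distrib, ← Finset.mul_sum, ← Finset.mul_sum]
    have e1 : ∑ k ∈ Finset.range (n + 1), (n.choose k : ℝ) * (-q⁻¹) ^ k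
        = (1 - q⁻¹) ^ n := by rw [binom]; ring_nf
    have e2 : ∑ k ∈ Finset.range (n + 1), (n.choose k : ℝ) * (-1 : ℝ) ^ k = 0 := by
      rw [binom, neg_add_cancel, zero_pow (by omega : n ≠ 0)]
    rw [e1, e2, ← hS]
    ring
  -- unfold and finish
  simp only [hqGenocchi, Nat.add_eq_zero, Nat.succ_ne_zero, and_false, if_false,
    Nat.add_sub_cancel, Nat.cast_add, Nat.cast_one]
  rw [hLsum, hRsum]
  -- algebra
  have hfac : (1 : ℝ) - q⁻¹ = (1 - q) * (-q⁻¹) := by field_simp; ring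
  have hpow : ((1 : ℝ) - q⁻¹) ^ n = (1 - q) ^ n * ((-1 : ℝ) ^ n * (q⁻¹) ^ n) := by
    rw [hfac, mul_pow, neg_pow, inv_pow]; try ring
  have hqh1 : q ^ ((h : ℝ) + 1) = q ^ ((h : ℝ)) * q := by
    rw [Real.rpow_add hq0, Real.rpow_one]
  rw [hpow, hqh1]
  have hpq : ((1 : ℝ) - q) ^ n ≠ 0 := pow_ne_zero _ h1q
  have hqn : (q : ℝ) ^ n ≠ 0 := pow_ne_zero _ hq
  rcases Nat.even_or_odd n with he | ho
  · rw [he.neg_one_pow]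
    simp only [inv_pow]
    field_simp
    try ring
  · rw [ho.neg_one_pow]
    simp only [inv_pow]
    field_simp
    try ring
end

section
/- Let q be a real number with q > 0 and q ≠ 1, let h be an integer with h ≥ 1, and let n, k be natural numbers with n > k and k > 0. Then Σ_{l=0}^{n-k} binom(n-k,l) · (-1)^l · G_{l+k+1}^{(h)}(q)/(l+k+1) = Σ_{l=0}^{k} binom(k,l) · (-1)^{k+l} · ( (1+q) + q^{h+1} · G_{n-l+1}^{(h)}(q^{-1})/(n-l+1) ). -/
open Finset Polynomial in
private lemma aux_coeff (b : ℝ) (m j : ℕ) :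
    ((1 + C b * X) ^ m).coeff j = (m.choose j : ℝ) * b ^ j := by
  have key : ∀ i : ℕ, ((C b * X) ^ i * 1 ^ (m - i) * (m.choose i : ℝ[X])).coeff j
      = if i = j then (m.choose j : ℝ) * b ^ j else 0 := by
    intro i
    rw [one_pow, mul_one, mul_pow, ← C_pow, ← C_eq_natCast, mul_assoc,
      mul_comm (X ^ i) (C (m.choose i : ℝ)), ← mul_assoc, ← C_mul, coeff_mul_X_pow']
    by_cases hij : i = j
    · subst hij; rw [if_pos le_rfl, if_pos rfl, Nat.sub_self, coeff_C, if_pos rfl]; ring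
    · by_cases hle : i ≤ j
      · rw [if_pos hle, coeff_C, if_neg (by omega)]
        rw [if_neg hij]
      · rw [if_neg hle, if_neg hij]
  rw [add_comm, add_pow, finset_sum_coeff]
  simp only [key]
  rw [Finset.sum_ite_eq' (Finset.range (m+1)) j]
  by_cases hj : j ∈ Finset.range (m+1)
  · simp [hj]
  · rw [if_neg hj]
    rw [Finset.mem_range, not_lt] at hj
    rw [Nat.choose_eq_zero_of_lt (by omega)]
    simp

private lemma geno_val (q : ℝ) (hq0 : 0 < q) (hq1 : q ≠ 1) (h : ℤ) (m : ℕ) :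
    hqGenocchi h q (m + 1) 0 / ((m : ℝ) + 1) =
      (1 + q) * ((1 - q)⁻¹) ^ m *
        ∑ j ∈ Finset.range (m + 1),
          ((m.choose j : ℝ) * (-1 : ℝ) ^ j * (1 + q ^ (h + (j : ℤ)))⁻¹) := by
  have hq1' : (1 : ℝ) - q ≠ 0 := sub_ne_zero.2 (Ne.symm hq1)
  have hm1 : ((m : ℝ) + 1) ≠ 0 := by positivity
  rw [hqGenocchi, if_neg (Nat.succ_ne_zero m)]
  have hsum : ∀ j ∈ Finset.range (m + 1),
      (((m + 1 - 1).choose j : ℝ) * (-1 : ℝ) ^ j * q ^ ((j : ℝ) * 0) /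
          (1 + q ^ ((h : ℝ) + (j : ℝ))))
        = ((m.choose j : ℝ) * (-1 : ℝ) ^ j * (1 + q ^ (h + (j : ℤ)))⁻¹) := by
    intro j _
    rw [mul_zero, Real.rpow_zero, mul_one, Nat.add_sub_cancel]
    rw [show ((h : ℝ) + (j : ℝ)) = ((h + (j : ℤ) : ℤ) : ℝ) by push_cast; ring,
      Real.rpow_intCast, div_eq_mul_inv]
  rw [Finset.sum_congr rfl hsum]
  push_cast
  rw [div_eq_iff hm1, div_eq_mul_inv, ← inv_pow]
  ring

private lemma alt_zero (m : ℕ) (hm : 1 ≤ m) :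
    ∑ j ∈ Finset.range (m + 1), ((m.choose j : ℝ) * (-1 : ℝ) ^ j) = 0 := by
  have := Int.alternating_sum_range_choose_of_ne (n := m) (by omega)
  have h2 : ((∑ i ∈ Finset.range (m + 1), ((-1 : ℤ) ^ i * m.choose i) : ℤ) : ℝ) = 0 := by
    rw [this]; norm_num
  push_cast at h2
  rw [← h2]
  exact Finset.sum_congr rfl fun j _ => by ring

private lemma geno_inv_val (q : ℝ) (hq0 : 0 < q) (hq1 : q ≠ 1) (h : ℤ) (m : ℕ) (hm : 1 ≤ m) :
    q ^ ((h : ℝ) + 1) * hqGenocchi h q⁻¹ (m + 1) 0 / ((m : ℝ) + 1) =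
      -(1 + q) + (1 + q) * (-q) ^ m * ((1 - q)⁻¹) ^ m *
        ∑ j ∈ Finset.range (m + 1),
          ((m.choose j : ℝ) * (-q⁻¹) ^ j * (1 + q ^ (h + (j : ℤ)))⁻¹) := by
  have hq0' : q ≠ 0 := ne_of_gt hq0
  have hq1' : (1 : ℝ) - q ≠ 0 := sub_ne_zero.2 (Ne.symm hq1)
  have hqi0 : 0 < q⁻¹ := by positivity
  have hqi1 : q⁻¹ ≠ 1 := by simpa [inv_eq_one] using hq1
  have hden : ∀ j : ℕ, (1 : ℝ) + q ^ (h + (j : ℤ)) ≠ 0 := fun j => by positivity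
  have hrpow : q ^ ((h : ℝ) + 1) = q ^ (h + 1 : ℤ) := by
    rw [show ((h : ℝ) + 1) = ((h + 1 : ℤ) : ℝ) by push_cast; ring, Real.rpow_intCast]
  set T := ∑ j ∈ Finset.range (m + 1),
      ((m.choose j : ℝ) * (-1 : ℝ) ^ j * (1 + q ^ (h + (j : ℤ)))⁻¹) with hT
  set U := ∑ j ∈ Finset.range (m + 1),
      ((m.choose j : ℝ) * (-q⁻¹) ^ j * (1 + q ^ (h + (j : ℤ)))⁻¹) with hU
  have hflip : ∀ j : ℕ, (1 + (q⁻¹) ^ (h + (j : ℤ)))⁻¹ = 1 - (1 + q ^ (h + (j : ℤ)))⁻¹ := by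
    intro j
    have hx : (0:ℝ) < q ^ (h + (j : ℤ)) := zpow_pos hq0 _
    rw [inv_zpow]
    field_simp
    ring
  have hsum1 : ∑ j ∈ Finset.range (m + 1),
      ((m.choose j : ℝ) * (-1 : ℝ) ^ j * (1 + (q⁻¹) ^ (h + (j : ℤ)))⁻¹) = -T := by
    have step : ∀ j ∈ Finset.range (m + 1),
        ((m.choose j : ℝ) * (-1 : ℝ) ^ j * (1 + (q⁻¹) ^ (h + (j : ℤ)))⁻¹)
          = ((m.choose j : ℝ) * (-1 : ℝ) ^ j)
            - ((m.choose j : ℝ) * (-1 : ℝ) ^ j * (1 + q ^ (h + (j : ℤ)))⁻¹) := by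
      intro j _; rw [hflip j]; ring
    rw [Finset.sum_congr rfl step, Finset.sum_sub_distrib, alt_zero m hm, zero_sub, hT]
  have hkey : ∀ j : ℕ, q ^ (h : ℤ) * (1 + q ^ (h + (j : ℤ)))⁻¹
      = (q⁻¹) ^ j * (1 - (1 + q ^ (h + (j : ℤ)))⁻¹) := by
    intro j
    have hx : (0:ℝ) < q ^ (h + (j : ℤ)) := zpow_pos hq0 _
    have h1 : 1 - (1 + q ^ (h + (j : ℤ)))⁻¹ = q ^ (h + (j : ℤ)) * (1 + q ^ (h + (j : ℤ)))⁻¹ := by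
      field_simp
      ring
    have h2 : (q⁻¹) ^ j * q ^ (h + (j : ℤ)) = q ^ (h : ℤ) := by
      rw [← zpow_natCast q⁻¹ j, inv_zpow, ← zpow_neg, ← zpow_add₀ hq0']
      congr 1; ring
    rw [h1, ← mul_assoc, h2]
  have hbin : ∑ j ∈ Finset.range (m + 1), ((m.choose j : ℝ) * (-q⁻¹) ^ j) = (1 - q⁻¹) ^ m := by
    rw [show (1:ℝ) - q⁻¹ = -q⁻¹ + 1 by ring, add_pow]
    exact Finset.sum_congr rfl fun j _ => by ring
  have hsum2 : q ^ (h : ℤ) * T = (1 - q⁻¹) ^ m - U := by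
    rw [hT, Finset.mul_sum, ← hbin, ← Finset.sum_sub_distrib]
    refine Finset.sum_congr rfl fun j _ => ?_
    calc q ^ (h:ℤ) * ((m.choose j : ℝ) * (-1 : ℝ) ^ j * (1 + q ^ (h + (j : ℤ)))⁻¹)
        = (m.choose j : ℝ) * (-1 : ℝ) ^ j * (q ^ (h:ℤ) * (1 + q ^ (h + (j : ℤ)))⁻¹) := by ring
      _ = (m.choose j : ℝ) * (-1 : ℝ) ^ j *
            ((q⁻¹) ^ j * (1 - (1 + q ^ (h + (j : ℤ)))⁻¹)) := by rw [hkey j]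
      _ = (m.choose j : ℝ) * (-q⁻¹) ^ j
            - (m.choose j : ℝ) * (-q⁻¹) ^ j * (1 + q ^ (h + (j : ℤ)))⁻¹ := by
          rw [neg_pow (q⁻¹) j]; ring
  have hs : (1 - q⁻¹)⁻¹ = -q * (1 - q)⁻¹ := by
    refine inv_eq_of_mul_eq_one_right ?_
    field_simp
    ring
  have hq1i : (1 + q⁻¹) = (1 + q) * q⁻¹ := by field_simp; ring
  have hzq : q ^ (h + 1 : ℤ) = q ^ (h : ℤ) * q := zpow_add_one₀ hq0' h
  have hone : (-q) ^ m * ((1 - q)⁻¹) ^ m * (1 - q⁻¹) ^ m = 1 := by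
    rw [← mul_pow, ← mul_pow, show -q * (1 - q)⁻¹ * (1 - q⁻¹) = 1 by field_simp; ring]
    exact one_pow m
  rw [mul_div_assoc, geno_val q⁻¹ hqi0 hqi1 h m, hsum1, hrpow]
  calc q ^ (h + 1 : ℤ) * ((1 + q⁻¹) * ((1 - q⁻¹)⁻¹) ^ m * (-T))
      = -((1 + q) * (q * q⁻¹)) * ((-q) ^ m * ((1 - q)⁻¹) ^ m) * (q ^ (h:ℤ) * T) := by
        rw [hs, hq1i, hzq, mul_pow]; ring
    _ = -(1 + q) * ((-q) ^ m * ((1 - q)⁻¹) ^ m) * ((1 - q⁻¹) ^ m - U) := by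
        rw [mul_inv_cancel₀ hq0', hsum2, mul_one]
    _ = -(1 + q) + (1 + q) * (-q) ^ m * ((1 - q)⁻¹) ^ m * U := by
        linear_combination (-(1+q)) * hone

open Polynomial in
private lemma poly_eq (q : ℝ) (hq0 : q ≠ 0) (hq1 : (1:ℝ) - q ≠ 0) (n k : ℕ) (hkn : k ≤ n) :
    ∑ l ∈ Finset.range (n - k + 1),
        C (((n - k).choose l : ℝ) * (-1 : ℝ) ^ l * ((1 - q)⁻¹) ^ (l + k)) *
          (1 + C (-1 : ℝ) * X) ^ (l + k)
      = ∑ l ∈ Finset.range (k + 1),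
        C ((k.choose l : ℝ) * (-1 : ℝ) ^ (k + l) * (-q) ^ (n - l) * ((1 - q)⁻¹) ^ (n - l)) *
          (1 + C (-q⁻¹) * X) ^ (n - l) := by
  set r : ℝ := (1 - q)⁻¹ with hr
  set u : ℝ[X] := C r * (1 + C (-1 : ℝ) * X) with hu
  set v : ℝ[X] := C (-q) * (C r * (1 + C (-q⁻¹) * X)) with hv
  have hrq : r * (1 - q) = 1 := inv_mul_cancel₀ hq1
  have hqq : q * q⁻¹ = 1 := mul_inv_cancel₀ hq0
  have huv : u + v = 1 := by
    ext i
    rcases i with _ | _ | i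
    · simp [hu, hv, coeff_one, coeff_C_mul, coeff_add, coeff_X]
      linear_combination hrq
    · simp [hu, hv, coeff_one, coeff_C_mul, coeff_add, coeff_X]
      field_simp
      ring
    · simp [hu, hv, coeff_one, coeff_C_mul, coeff_add, coeff_X, coeff_C]
  have hP : ∑ l ∈ Finset.range (n - k + 1),
        C (((n - k).choose l : ℝ) * (-1 : ℝ) ^ l * r ^ (l + k)) *
          (1 + C (-1 : ℝ) * X) ^ (l + k)
      = u ^ k * (1 - u) ^ (n - k) := by
    rw [show (1 : ℝ[X]) - u = -u + 1 by ring, add_pow, Finset.mul_sum]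
    refine Finset.sum_congr rfl fun l _ => ?_
    have hneg : -u = C (-r) * (1 + C (-1 : ℝ) * X) := by
      rw [hu, ← neg_mul, ← map_neg]
    rw [show (((n - k).choose l : ℝ) * (-1 : ℝ) ^ l * r ^ (l + k) : ℝ)
        = ((n - k).choose l : ℝ) * (-r) ^ l * r ^ k by ring,
      C_mul, C_mul, C_pow, C_pow, C_eq_natCast, hneg, hu, mul_pow, mul_pow, pow_add]
    ring
  have hQ : ∑ l ∈ Finset.range (k + 1),
        C ((k.choose l : ℝ) * (-1 : ℝ) ^ (k + l) * (-q) ^ (n - l) * r ^ (n - l)) *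
          (1 + C (-q⁻¹) * X) ^ (n - l)
      = v ^ (n - k) * (1 - v) ^ k := by
    rw [show (1 : ℝ[X]) - v = -(-1 + v) by ring, neg_pow, add_pow, Finset.mul_sum,
      Finset.mul_sum]
    refine Finset.sum_congr rfl fun l hl => ?_
    rw [Finset.mem_range] at hl
    calc C ((k.choose l : ℝ) * (-1 : ℝ) ^ (k + l) * (-q) ^ (n - l) * r ^ (n - l)) *
          (1 + C (-q⁻¹) * X) ^ (n - l)
        = (-1 : ℝ[X]) ^ (k + l) * (k.choose l : ℝ[X]) * v ^ (n - l) := by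
          rw [show ((k.choose l : ℝ) * (-1 : ℝ) ^ (k + l) * (-q) ^ (n - l) * r ^ (n - l) : ℝ)
              = (k.choose l : ℝ) * (-1 : ℝ) ^ (k + l) * (-q * r) ^ (n - l) by ring,
            C_mul, C_mul, C_pow, C_pow, C_mul, C_eq_natCast, hv, mul_pow, mul_pow, mul_pow,
            show (C (-1 : ℝ)) = (-1 : ℝ[X]) by rw [map_neg, map_one]]
          ring
      _ = (-1 : ℝ[X]) ^ (k + l) * (k.choose l : ℝ[X]) * (v ^ (n - k) * v ^ (k - l)) := by
          rw [← pow_add, show n - k + (k - l) = n - l by omega]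
      _ = v ^ (n - k) * ((-1 : ℝ[X]) ^ k * ((-1 : ℝ[X]) ^ l * v ^ (k - l) * (k.choose l : ℝ[X]))) := by
          ring
  rw [hP, hQ, show v = 1 - u by linear_combination huv, sub_sub_cancel]
  ring

theorem statement6 (q : ℝ) (hq0 : 0 < q) (hq1 : q ≠ 1) (h : ℤ) (hh : 1 ≤ h)
    (n k : ℕ) (hk : 0 < k) (hnk : k < n) :
    ∑ l ∈ Finset.range (n - k + 1), ((n - k).choose l : ℝ) * (-1 : ℝ) ^ l *
        hqGenocchi h q (l + k + 1) 0 / ((l : ℝ) + (k : ℝ) + 1) =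
      ∑ l ∈ Finset.range (k + 1), (k.choose l : ℝ) * (-1 : ℝ) ^ (k + l) *
        ((1 + q) + q ^ ((h : ℝ) + 1) * hqGenocchi h q⁻¹ (n - l + 1) 0 / ((n : ℝ) - (l : ℝ) + 1)) := by
  have hq0' : q ≠ 0 := ne_of_gt hq0
  have hq1' : (1 : ℝ) - q ≠ 0 := sub_ne_zero.2 (Ne.symm hq1)
  have hkn : k ≤ n := le_of_lt hnk
  -- coefficientwise identity from the polynomial identity
  have hAB : ∀ j : ℕ,
      ∑ l ∈ Finset.range (n - k + 1),
          (((n - k).choose l : ℝ) * (-1 : ℝ) ^ l * ((1 - q)⁻¹) ^ (l + k)) *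
            (((l + k).choose j : ℝ) * (-1 : ℝ) ^ j)
        = ∑ l ∈ Finset.range (k + 1),
          ((k.choose l : ℝ) * (-1 : ℝ) ^ (k + l) * (-q) ^ (n - l) * ((1 - q)⁻¹) ^ (n - l)) *
            (((n - l).choose j : ℝ) * (-q⁻¹) ^ j) := by
    intro j
    have hpq := congrArg (fun p => Polynomial.coeff p j) (poly_eq q hq0' hq1' n k hkn)
    simpa only [Polynomial.finset_sum_coeff, Polynomial.coeff_C_mul, aux_coeff] using hpq
  calc ∑ l ∈ Finset.range (n - k + 1), ((n - k).choose l : ℝ) * (-1 : ℝ) ^ l *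
        hqGenocchi h q (l + k + 1) 0 / ((l : ℝ) + (k : ℝ) + 1)
      = ∑ l ∈ Finset.range (n - k + 1), ∑ j ∈ Finset.range (n + 1),
          ((n - k).choose l : ℝ) * (-1 : ℝ) ^ l *
            ((1 + q) * ((1 - q)⁻¹) ^ (l + k) *
              (((l + k).choose j : ℝ) * (-1 : ℝ) ^ j * (1 + q ^ (h + (j : ℤ)))⁻¹)) := by
        refine Finset.sum_congr rfl fun l hl => ?_
        rw [Finset.mem_range] at hl
        have hext : ∑ j ∈ Finset.range (l + k + 1),
            (((l + k).choose j : ℝ) * (-1 : ℝ) ^ j * (1 + q ^ (h + (j : ℤ)))⁻¹)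
            = ∑ j ∈ Finset.range (n + 1),
            (((l + k).choose j : ℝ) * (-1 : ℝ) ^ j * (1 + q ^ (h + (j : ℤ)))⁻¹) :=
          Finset.sum_subset (Finset.range_subset_range.2 (by omega))
            (fun j _ hj => by
              rw [Finset.mem_range, not_lt] at hj
              rw [Nat.choose_eq_zero_of_lt (by omega)]
              simp)
        rw [mul_div_assoc, show (l : ℝ) + (k : ℝ) + 1 = ((l + k : ℕ) : ℝ) + 1 by
            push_cast; ring,
          geno_val q hq0 hq1 h (l + k), hext, Finset.mul_sum, Finset.mul_sum]
    _ = ∑ j ∈ Finset.range (n + 1), ∑ l ∈ Finset.range (n - k + 1),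
          ((n - k).choose l : ℝ) * (-1 : ℝ) ^ l *
            ((1 + q) * ((1 - q)⁻¹) ^ (l + k) *
              (((l + k).choose j : ℝ) * (-1 : ℝ) ^ j * (1 + q ^ (h + (j : ℤ)))⁻¹)) :=
        Finset.sum_comm
    _ = ∑ j ∈ Finset.range (n + 1), (1 + q) * (1 + q ^ (h + (j : ℤ)))⁻¹ *
          ∑ l ∈ Finset.range (n - k + 1),
            (((n - k).choose l : ℝ) * (-1 : ℝ) ^ l * ((1 - q)⁻¹) ^ (l + k)) *
              (((l + k).choose j : ℝ) * (-1 : ℝ) ^ j) := by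
        refine Finset.sum_congr rfl fun j _ => ?_
        rw [Finset.mul_sum]
        exact Finset.sum_congr rfl fun l _ => by ring
    _ = ∑ j ∈ Finset.range (n + 1), (1 + q) * (1 + q ^ (h + (j : ℤ)))⁻¹ *
          ∑ l ∈ Finset.range (k + 1),
            ((k.choose l : ℝ) * (-1 : ℝ) ^ (k + l) * (-q) ^ (n - l) * ((1 - q)⁻¹) ^ (n - l)) *
              (((n - l).choose j : ℝ) * (-q⁻¹) ^ j) := by
        refine Finset.sum_congr rfl fun j _ => ?_
        rw [hAB j]
    _ = ∑ j ∈ Finset.range (n + 1), ∑ l ∈ Finset.range (k + 1),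
          (k.choose l : ℝ) * (-1 : ℝ) ^ (k + l) *
            ((1 + q) * (-q) ^ (n - l) * ((1 - q)⁻¹) ^ (n - l) *
              (((n - l).choose j : ℝ) * (-q⁻¹) ^ j * (1 + q ^ (h + (j : ℤ)))⁻¹)) := by
        refine Finset.sum_congr rfl fun j _ => ?_
        rw [Finset.mul_sum]
        exact Finset.sum_congr rfl fun l _ => by ring
    _ = ∑ l ∈ Finset.range (k + 1), ∑ j ∈ Finset.range (n + 1),
          (k.choose l : ℝ) * (-1 : ℝ) ^ (k + l) *
            ((1 + q) * (-q) ^ (n - l) * ((1 - q)⁻¹) ^ (n - l) *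
              (((n - l).choose j : ℝ) * (-q⁻¹) ^ j * (1 + q ^ (h + (j : ℤ)))⁻¹)) :=
        Finset.sum_comm
    _ = ∑ l ∈ Finset.range (k + 1), (k.choose l : ℝ) * (-1 : ℝ) ^ (k + l) *
          ((1 + q) + q ^ ((h : ℝ) + 1) * hqGenocchi h q⁻¹ (n - l + 1) 0 /
            ((n : ℝ) - (l : ℝ) + 1)) := by
        refine Finset.sum_congr rfl fun l hl => ?_
        rw [Finset.mem_range] at hl
        have hext : ∑ j ∈ Finset.range (n - l + 1),
            (((n - l).choose j : ℝ) * (-q⁻¹) ^ j * (1 + q ^ (h + (j : ℤ)))⁻¹)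
            = ∑ j ∈ Finset.range (n + 1),
            (((n - l).choose j : ℝ) * (-q⁻¹) ^ j * (1 + q ^ (h + (j : ℤ)))⁻¹) :=
          Finset.sum_subset (Finset.range_subset_range.2 (by omega))
            (fun j _ hj => by
              rw [Finset.mem_range, not_lt] at hj
              rw [Nat.choose_eq_zero_of_lt (by omega)]
              simp)
        rw [show (n : ℝ) - (l : ℝ) + 1 = ((n - l : ℕ) : ℝ) + 1 by
            rw [Nat.cast_sub (by omega)],
          geno_inv_val q hq0 hq1 h (n - l) (by omega), add_neg_cancel_left, hext,
          Finset.mul_sum, Finset.mul_sum]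
end

section
/- Let q be a real number with q > 0 and q ≠ 1, let h be an integer with h ≥ 1, and let n₁, n₂, k be natural numbers with n₁ + n₂ > 2k and k > 0. Then Σ_{l=0}^{n₁+n₂-2k} binom(n₁+n₂-2k, l) · (-1)^l · G_{l+2k+1}^{(h)}(q)/(l+2k+1) = Σ_{l=0}^{2k} binom(2k,l) · (-1)^{2k+l} · ( (1+q) + q^{h+1} · G_{n₁+n₂-l+1}^{(h)}(q^{-1})/(n₁+n₂-l+1) ). -/
section Helpers
open Polynomial Finset

lemma hqG_div (h : ℤ) (q : ℝ) (m : ℕ) :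
    hqGenocchi h q (m+1) 0 = ((m:ℝ)+1) * ((1+q) / (1-q)^m *
      ∑ j ∈ range (m+1), (m.choose j : ℝ) * (-1:ℝ)^j / (1 + q ^ ((h:ℝ) + (j:ℝ)))) := by
  unfold hqGenocchi
  rw [if_neg (Nat.succ_ne_zero m)]
  simp only [Nat.add_sub_cancel, Nat.cast_add, Nat.cast_one, mul_zero, Real.rpow_zero, mul_one]
  ring

lemma altR (m : ℕ) (hm : m ≠ 0) :
    ∑ j ∈ range (m+1), (m.choose j : ℝ) * (-1:ℝ)^j = 0 := by
  calc ∑ j ∈ range (m+1), (m.choose j : ℝ) * (-1:ℝ)^j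
      = ∑ j ∈ range (m+1), (-1:ℝ)^j * (m.choose j : ℝ) :=
        Finset.sum_congr rfl fun j _ => mul_comm _ _
    _ = 0 := by exact_mod_cast Int.alternating_sum_range_choose_of_ne hm

/-- binomial theorem over an extended range -/
lemma binom_ext (x : ℝ) (n N : ℕ) (hn : n ≤ N) :
    ∑ j ∈ range (N+1), (n.choose j : ℝ) * x^j = (1+x)^n := by
  rw [← Finset.sum_subset (Finset.range_subset_range.mpr (by omega : n+1 ≤ N+1))
      (fun j _ hj => by
        rw [Nat.choose_eq_zero_of_lt (by simpa using hj), Nat.cast_zero, zero_mul])]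
  rw [show ((1:ℝ)+x)^n = (x+1)^n by rw [add_comm], add_pow]
  exact Finset.sum_congr rfl fun j _ => by rw [one_pow]; ring
lemma key (q : ℝ) (M K j : ℕ) :
    ∑ l ∈ range (M+1), (M.choose l : ℝ) * (q-1)^(M-l) * ((l+K).choose j : ℝ)
    = ∑ l ∈ range (K+1), (K.choose l : ℝ) * (1-q)^(K-l) * (q^(M+l-j) * ((M+l).choose j : ℝ)) := by
  have base1 : (X + C q : ℝ[X]) = (1 + X) + C (q-1) := by rw [map_sub, C_1]; ring
  have base2 : (1 + X : ℝ[X]) = (X + C q) + C (1-q) := by rw [map_sub, C_1]; ring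
  have expand1 := add_pow (1 + X : ℝ[X]) (C (q-1)) M
  have expand2 := add_pow (X + C q : ℝ[X]) (C (1-q)) K
  have e1 : ((1 + X : ℝ[X])^K * (X + C q)^M).coeff j
      = ∑ l ∈ range (M+1), (M.choose l : ℝ) * (q-1)^(M-l) * ((l+K).choose j : ℝ) := by
    rw [base1, expand1, Finset.mul_sum, finset_sum_coeff]
    refine Finset.sum_congr rfl fun l _ => ?_
    have h1 : (1 + X : ℝ[X])^K * ((1+X)^l * (C (q-1)) ^ (M-l) * ((M.choose l : ℕ) : ℝ[X]))
        = C ((q-1)^(M-l) * (M.choose l : ℝ)) * (1+X)^(l+K) := by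
      rw [C_mul, C_pow, C_eq_natCast, pow_add]; ring
    rw [h1, coeff_C_mul, coeff_one_add_X_pow]; ring
  have e2 : ((1 + X : ℝ[X])^K * (X + C q)^M).coeff j
      = ∑ l ∈ range (K+1), (K.choose l : ℝ) * (1-q)^(K-l) * (q^(M+l-j) * ((M+l).choose j : ℝ)) := by
    rw [base2, expand2, Finset.sum_mul, finset_sum_coeff]
    refine Finset.sum_congr rfl fun l _ => ?_
    have h1 : ((X + C q : ℝ[X])^l * (C (1-q)) ^ (K-l) * ((K.choose l : ℕ) : ℝ[X])) * (X + C q)^M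
        = C ((1-q)^(K-l) * (K.choose l : ℝ)) * (X + C q)^(M+l) := by
      rw [C_mul, C_pow, C_eq_natCast, pow_add]; ring
    rw [h1, coeff_C_mul, coeff_X_add_C_pow]; ring
  rw [← e1, e2]


lemma npow_sub_div (q : ℝ) (hq : q ≠ 0) (n j : ℕ) :
    q ^ (n - j) * ((n.choose j : ℕ) : ℝ) = (n.choose j : ℝ) * q ^ n / q ^ j := by
  rcases le_or_gt j n with hle | hlt
  · rw [pow_sub₀ q hq hle]; ring
  · rw [Nat.choose_eq_zero_of_lt hlt]; simp

lemma claim (q : ℝ) (hq0 : q ≠ 0) (h1q : (1:ℝ) - q ≠ 0) (M K j : ℕ) :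
    ∑ l ∈ range (M+1), (M.choose l : ℝ) * ((l+K).choose j : ℝ) * (-1)^l / (1-q)^(l+K)
    = (-1)^M * ∑ l ∈ range (K+1),
        (K.choose l : ℝ) * ((M+K-l).choose j : ℝ) * q^(M+K-l) / ((1-q)^(M+K-l) * q^j) := by
  have pow1q : ∀ m : ℕ, (1-q)^m ≠ 0 := fun m => pow_ne_zero m h1q
  have step1 : ∑ l ∈ range (M+1), (M.choose l : ℝ) * ((l+K).choose j : ℝ) * (-1)^l / (1-q)^(l+K)
      = (∑ l ∈ range (M+1), (M.choose l : ℝ) * (q-1)^(M-l) * ((l+K).choose j : ℝ)) * (-1)^M / (1-q)^(M+K) := by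
    rw [Finset.sum_mul, Finset.sum_div]
    refine Finset.sum_congr rfl fun l hl => ?_
    have hlM : l ≤ M := Nat.lt_succ_iff.mp (Finset.mem_range.mp hl)
    have hp : (1-q)^(M+K) = (1-q)^(M-l) * (1-q)^(l+K) := by
      rw [← pow_add]; congr 1; omega
    have hs : ((-1:ℝ))^(M-l) * (-1)^M = (-1)^l := by
      have h2 : ((-1:ℝ))^(M-l) * (-1)^M = (-1)^(M-l+M) := by rw [pow_add]
      rw [h2, show M - l + M = l + 2*(M-l) by omega, pow_add, pow_mul]
      simp
    have hneg : (q-1:ℝ)^(M-l) = (-1)^(M-l) * (1-q)^(M-l) := by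
      rw [show (q-1:ℝ) = -1 * (1-q) by ring, mul_pow]
    rw [div_eq_div_iff (pow1q _) (pow1q _), hneg, hp, ← hs]
    ring
  have g := fun l' => ((-1:ℝ))^M * ((K.choose l' : ℝ) * ((M+K-l').choose j : ℝ) * q^(M+K-l') / ((1-q)^(M+K-l') * q^j))
  have hrefl := Finset.sum_range_reflect (fun l' => ((-1:ℝ))^M * ((K.choose l' : ℝ) * ((M+K-l').choose j : ℝ) * q^(M+K-l') / ((1-q)^(M+K-l') * q^j))) (K+1)
  simp only [Nat.add_sub_cancel] at hrefl
  have step2 : (∑ l ∈ range (K+1), (K.choose l : ℝ) * (1-q)^(K-l) * (q^(M+l-j) * ((M+l).choose j : ℝ))) * (-1)^M / (1-q)^(M+K)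
      = (-1:ℝ)^M * ∑ l ∈ range (K+1),
        (K.choose l : ℝ) * ((M+K-l).choose j : ℝ) * q^(M+K-l) / ((1-q)^(M+K-l) * q^j) := by
    rw [Finset.mul_sum, ← hrefl, Finset.sum_mul, Finset.sum_div]
    refine Finset.sum_congr rfl fun l hl => ?_
    have hlK : l ≤ K := Nat.lt_succ_iff.mp (Finset.mem_range.mp hl)
    have h1 : M + K - (K - l) = M + l := by omega
    have h2 : K.choose (K - l) = K.choose l := Nat.choose_symm hlK
    rw [h1, h2, npow_sub_div q hq0 (M+l) j]
    have hp : (1-q)^(M+K) = (1-q)^(K-l) * (1-q)^(M+l) := by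
      rw [← pow_add]; congr 1; omega
    rw [hp]
    field_simp
  rw [step1, key q M K j, step2]

lemma main (q : ℝ) (hq0 : 0 < q) (hq1 : q ≠ 1) (h : ℤ) (N k : ℕ) (hk : 0 < k) (hnk : 2*k < N) :
    ∑ l ∈ range (N - 2*k + 1), ((N - 2*k).choose l : ℝ) * (-1:ℝ)^l *
        hqGenocchi h q (l + 2*k + 1) 0 / ((l:ℝ) + 2*(k:ℝ) + 1)
    = ∑ l ∈ range (2*k + 1), ((2*k).choose l : ℝ) * (-1:ℝ)^(2*k+l) *
        ((1 + q) + q ^ ((h:ℝ)+1) * hqGenocchi h q⁻¹ (N - l + 1) 0 / ((N:ℝ) - (l:ℝ) + 1)) := by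
  have hqne : q ≠ 0 := ne_of_gt hq0
  have h1q : (1:ℝ) - q ≠ 0 := sub_ne_zero.mpr (Ne.symm hq1)
  have hq1' : q - 1 ≠ 0 := sub_ne_zero.mpr hq1
  have hYpos : ∀ j : ℕ, (0:ℝ) < q ^ ((h:ℝ) + (j:ℝ)) := fun j => Real.rpow_pos_of_pos hq0 _
  have hYne : ∀ j : ℕ, (1:ℝ) + q ^ ((h:ℝ)+(j:ℝ)) ≠ 0 := fun j => by
    have := hYpos j; positivity
  have hHpos : (0:ℝ) < q ^ ((h:ℝ)) := Real.rpow_pos_of_pos hq0 _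
  set M := N - 2*k with hM
  have hMN : M + 2*k = N := by omega
  trans (∑ j ∈ range (N+1), ((1+q) * (-1:ℝ)^M * (-1:ℝ)^j / (1 + q ^ ((h:ℝ)+(j:ℝ)))) *
      ∑ l ∈ range (2*k+1), ((2*k).choose l : ℝ) * ((N-l).choose j : ℝ) * q^(N-l) /
        ((1-q)^(N-l) * q^j))
  · calc ∑ l ∈ range (M+1), (M.choose l : ℝ) * (-1:ℝ)^l *
            hqGenocchi h q (l + 2*k + 1) 0 / ((l:ℝ) + 2*(k:ℝ) + 1)
        = ∑ l ∈ range (M+1), ∑ j ∈ range (N+1),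
            ((M.choose l : ℝ) * ((l+2*k).choose j : ℝ) * (-1:ℝ)^l / (1-q)^(l+2*k)) *
            ((1+q) * (-1:ℝ)^j / (1 + q ^ ((h:ℝ)+(j:ℝ)))) := by
          refine Finset.sum_congr rfl fun l hl => ?_
          have hlM : l ≤ M := Nat.lt_succ_iff.mp (mem_range.mp hl)
          rw [hqG_div h q (l+2*k),
            show ((l:ℝ) + 2*(k:ℝ) + 1) = ((l+2*k : ℕ):ℝ) + 1 by push_cast; ring,
            mul_div_assoc, mul_div_cancel_left₀ _ (by positivity : ((l+2*k : ℕ):ℝ) + 1 ≠ 0),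
            Finset.sum_subset (Finset.range_subset_range.mpr (by omega : l+2*k+1 ≤ N+1))
              (fun j _ hj => by
                rw [Nat.choose_eq_zero_of_lt (by simp at hj; omega), Nat.cast_zero, zero_mul,
                  zero_div]),
            Finset.mul_sum, Finset.mul_sum]
          exact Finset.sum_congr rfl fun j _ => by ring
      _ = ∑ j ∈ range (N+1), ∑ l ∈ range (M+1),
            ((M.choose l : ℝ) * ((l+2*k).choose j : ℝ) * (-1:ℝ)^l / (1-q)^(l+2*k)) *
            ((1+q) * (-1:ℝ)^j / (1 + q ^ ((h:ℝ)+(j:ℝ)))) := Finset.sum_comm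
      _ = ∑ j ∈ range (N+1), ((1+q) * (-1:ℝ)^j / (1 + q ^ ((h:ℝ)+(j:ℝ)))) *
            ∑ l ∈ range (M+1),
              ((M.choose l : ℝ) * ((l+2*k).choose j : ℝ) * (-1:ℝ)^l / (1-q)^(l+2*k)) := by
          refine Finset.sum_congr rfl fun j _ => ?_
          rw [← Finset.sum_mul, mul_comm]
      _ = ∑ j ∈ range (N+1), ((1+q) * (-1:ℝ)^M * (-1:ℝ)^j / (1 + q ^ ((h:ℝ)+(j:ℝ)))) *
            ∑ l ∈ range (2*k+1), ((2*k).choose l : ℝ) * ((N-l).choose j : ℝ) * q^(N-l) /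
              ((1-q)^(N-l) * q^j) := by
          refine Finset.sum_congr rfl fun j _ => ?_
          rw [claim q hqne h1q M (2*k) j]
          simp only [hMN]
          ring
  · refine Eq.symm ?_
    have inner_rw : ∀ m : ℕ, m ≠ 0 → m ≤ N →
        ∑ j ∈ range (m+1), (m.choose j : ℝ) * (-1:ℝ)^j / (1 + q⁻¹ ^ ((h:ℝ)+(j:ℝ)))
        = -∑ j ∈ range (N+1), (m.choose j : ℝ) * (-1:ℝ)^j / (1 + q ^ ((h:ℝ)+(j:ℝ))) := by
      intro m hm hmN
      have step : ∀ j : ℕ, (m.choose j : ℝ) * (-1:ℝ)^j / (1 + q⁻¹ ^ ((h:ℝ)+(j:ℝ)))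
          = (m.choose j : ℝ) * (-1:ℝ)^j
            - (m.choose j : ℝ) * (-1:ℝ)^j / (1 + q ^ ((h:ℝ)+(j:ℝ))) := by
        intro j
        rw [Real.inv_rpow hq0.le]
        have h1 := hYpos j
        have h2 : (1:ℝ) + (q ^ ((h:ℝ)+(j:ℝ)))⁻¹ ≠ 0 := by positivity
        field_simp
        ring
      calc ∑ j ∈ range (m+1), (m.choose j : ℝ) * (-1:ℝ)^j / (1 + q⁻¹ ^ ((h:ℝ)+(j:ℝ)))
          = ∑ j ∈ range (m+1), ((m.choose j : ℝ) * (-1:ℝ)^j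
              - (m.choose j : ℝ) * (-1:ℝ)^j / (1 + q ^ ((h:ℝ)+(j:ℝ)))) :=
            Finset.sum_congr rfl fun j _ => step j
        _ = (∑ j ∈ range (m+1), (m.choose j : ℝ) * (-1:ℝ)^j)
            - ∑ j ∈ range (m+1), (m.choose j : ℝ) * (-1:ℝ)^j / (1 + q ^ ((h:ℝ)+(j:ℝ))) :=
            Finset.sum_sub_distrib _ _
        _ = -∑ j ∈ range (N+1), (m.choose j : ℝ) * (-1:ℝ)^j / (1 + q ^ ((h:ℝ)+(j:ℝ))) := by
            rw [altR m hm, zero_sub,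
              Finset.sum_subset (Finset.range_subset_range.mpr (by omega : m+1 ≤ N+1))
                (fun j _ hj => by
                  rw [Nat.choose_eq_zero_of_lt (by simp at hj; omega), Nat.cast_zero, zero_mul,
                    zero_div])]
    calc ∑ l ∈ range (2*k + 1), ((2*k).choose l : ℝ) * (-1:ℝ)^(2*k+l) *
            ((1 + q) + q ^ ((h:ℝ)+1) * hqGenocchi h q⁻¹ (N - l + 1) 0 / ((N:ℝ) - (l:ℝ) + 1))
        = ∑ l ∈ range (2*k+1), (((2*k).choose l : ℝ) * (-1:ℝ)^(2*k+l) * (1+q)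
            + ∑ j ∈ range (N+1), ((2*k).choose l : ℝ) * (-1:ℝ)^(2*k+l) *
              (q ^ ((h:ℝ)+1) * ((1+q⁻¹) / (1-q⁻¹)^(N-l) *
                (-( ((N-l).choose j : ℝ) * (-1:ℝ)^j / (1 + q ^ ((h:ℝ)+(j:ℝ))) ))))) := by
          refine Finset.sum_congr rfl fun l hl => ?_
          have hl2k : l ≤ 2*k := Nat.lt_succ_iff.mp (mem_range.mp hl)
          rw [hqG_div h q⁻¹ (N-l),
            show ((N:ℝ) - (l:ℝ) + 1) = ((N - l : ℕ):ℝ) + 1 by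
              rw [Nat.cast_sub (by omega : l ≤ N)],
            mul_div_assoc, mul_div_cancel_left₀ _ (by positivity : ((N-l : ℕ):ℝ) + 1 ≠ 0),
            inner_rw (N-l) (by omega) (by omega), mul_add]
          congr 1
          rw [← Finset.sum_neg_distrib, Finset.mul_sum, Finset.mul_sum, Finset.mul_sum]
      _ = ∑ l ∈ range (2*k+1), ((2*k).choose l : ℝ) * (-1:ℝ)^(2*k+l) * (1+q)
          + ∑ l ∈ range (2*k+1), ∑ j ∈ range (N+1), ((2*k).choose l : ℝ) * (-1:ℝ)^(2*k+l) *
              (q ^ ((h:ℝ)+1) * ((1+q⁻¹) / (1-q⁻¹)^(N-l) *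
                (-( ((N-l).choose j : ℝ) * (-1:ℝ)^j / (1 + q ^ ((h:ℝ)+(j:ℝ))) )))) :=
          Finset.sum_add_distrib
      _ = ∑ l ∈ range (2*k+1), ∑ j ∈ range (N+1), ((2*k).choose l : ℝ) * (-1:ℝ)^(2*k+l) *
              (q ^ ((h:ℝ)+1) * ((1+q⁻¹) / (1-q⁻¹)^(N-l) *
                (-( ((N-l).choose j : ℝ) * (-1:ℝ)^j / (1 + q ^ ((h:ℝ)+(j:ℝ))) )))) := by
          have first0 : ∑ l ∈ range (2*k+1), ((2*k).choose l : ℝ) * (-1:ℝ)^(2*k+l) * (1+q)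
              = 0 := by
            calc ∑ l ∈ range (2*k+1), ((2*k).choose l : ℝ) * (-1:ℝ)^(2*k+l) * (1+q)
                = ∑ l ∈ range (2*k+1), (1+q) * (((2*k).choose l : ℝ) * (-1:ℝ)^l) :=
                  Finset.sum_congr rfl fun l _ => by
                    rw [pow_add, pow_mul, neg_one_sq, one_pow, one_mul]; ring
              _ = (1+q) * ∑ l ∈ range (2*k+1), ((2*k).choose l : ℝ) * (-1:ℝ)^l :=
                  (Finset.mul_sum _ _ _).symm
              _ = 0 := by rw [altR (2*k) (by omega), mul_zero]
          rw [first0, zero_add]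
      _ = ∑ l ∈ range (2*k+1), ∑ j ∈ range (N+1),
            (((1+q) * (-1:ℝ)^l * (-1:ℝ)^j / (1 + q ^ ((h:ℝ)+(j:ℝ)))) *
              (((2*k).choose l : ℝ) * ((N-l).choose j : ℝ) * q^(N-l) / ((q-1)^(N-l) * q^j))
            - ((1+q) * (-1:ℝ)^l * (-1:ℝ)^j) *
              (((2*k).choose l : ℝ) * ((N-l).choose j : ℝ) * q^(N-l) / ((q-1)^(N-l) * q^j))) := by
          refine Finset.sum_congr rfl fun l hl => Finset.sum_congr rfl fun j hj => ?_
          have e2k : ((-1:ℝ))^(2*k+l) = (-1:ℝ)^l := by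
            rw [pow_add, pow_mul, neg_one_sq, one_pow, one_mul]
          have eh1 : q ^ ((h:ℝ)+1) = q ^ ((h:ℝ)) * q := by
            rw [Real.rpow_add hq0, Real.rpow_one]
          have eY : q ^ ((h:ℝ)+(j:ℝ)) = q ^ ((h:ℝ)) * q^j := by
            rw [Real.rpow_add hq0, Real.rpow_natCast]
          have eqi : (1 - q⁻¹ : ℝ) = (q-1)/q := by field_simp
          rw [e2k, eh1, eY, eqi, div_pow]
          have hden : (1:ℝ) + q ^ ((h:ℝ)) * q^j ≠ 0 := by
            have := mul_pos hHpos (pow_pos hq0 j); linarith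
          field_simp
          ring
      _ = ∑ l ∈ range (2*k+1), (∑ j ∈ range (N+1),
            ((1+q) * (-1:ℝ)^l * (-1:ℝ)^j / (1 + q ^ ((h:ℝ)+(j:ℝ)))) *
              (((2*k).choose l : ℝ) * ((N-l).choose j : ℝ) * q^(N-l) / ((q-1)^(N-l) * q^j))
          - ∑ j ∈ range (N+1), ((1+q) * (-1:ℝ)^l * (-1:ℝ)^j) *
              (((2*k).choose l : ℝ) * ((N-l).choose j : ℝ) * q^(N-l) / ((q-1)^(N-l) * q^j))) :=
          Finset.sum_congr rfl fun l _ => Finset.sum_sub_distrib _ _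
      _ = ∑ l ∈ range (2*k+1), ∑ j ∈ range (N+1),
            ((1+q) * (-1:ℝ)^l * (-1:ℝ)^j / (1 + q ^ ((h:ℝ)+(j:ℝ)))) *
              (((2*k).choose l : ℝ) * ((N-l).choose j : ℝ) * q^(N-l) / ((q-1)^(N-l) * q^j)) := by
          have esum : ∑ l ∈ range (2*k+1), ∑ j ∈ range (N+1),
              ((1+q) * (-1:ℝ)^l * (-1:ℝ)^j) *
                (((2*k).choose l : ℝ) * ((N-l).choose j : ℝ) * q^(N-l) / ((q-1)^(N-l) * q^j))
              = 0 := by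
            have per_l : ∀ l ∈ range (2*k+1), ∑ j ∈ range (N+1),
                ((1+q) * (-1:ℝ)^l * (-1:ℝ)^j) *
                  (((2*k).choose l : ℝ) * ((N-l).choose j : ℝ) * q^(N-l) / ((q-1)^(N-l) * q^j))
                = (1+q) * (((2*k).choose l : ℝ) * (-1:ℝ)^l) := by
              intro l hl
              have hl2k : l ≤ 2*k := Nat.lt_succ_iff.mp (mem_range.mp hl)
              calc ∑ j ∈ range (N+1), ((1+q) * (-1:ℝ)^l * (-1:ℝ)^j) *
                    (((2*k).choose l : ℝ) * ((N-l).choose j : ℝ) * q^(N-l) / ((q-1)^(N-l) * q^j))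
                  = ∑ j ∈ range (N+1),
                    ((1+q) * (-1:ℝ)^l * ((2*k).choose l : ℝ) * q^(N-l) / (q-1)^(N-l)) *
                      (((N-l).choose j : ℝ) * (-1/q)^j) :=
                    Finset.sum_congr rfl fun j _ => by
                      rw [div_pow]
                      field_simp
                _ = ((1+q) * (-1:ℝ)^l * ((2*k).choose l : ℝ) * q^(N-l) / (q-1)^(N-l)) *
                      ((1 + (-1/q))^(N-l)) := by
                    rw [← Finset.mul_sum, binom_ext (-1/q) (N-l) N (by omega)]
                _ = (1+q) * (((2*k).choose l : ℝ) * (-1:ℝ)^l) := by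
                    rw [show (1 + (-1/q) : ℝ) = (q-1)/q by field_simp; try ring, div_pow]
                    field_simp
            calc ∑ l ∈ range (2*k+1), ∑ j ∈ range (N+1),
                ((1+q) * (-1:ℝ)^l * (-1:ℝ)^j) *
                  (((2*k).choose l : ℝ) * ((N-l).choose j : ℝ) * q^(N-l) / ((q-1)^(N-l) * q^j))
                = ∑ l ∈ range (2*k+1), (1+q) * (((2*k).choose l : ℝ) * (-1:ℝ)^l) :=
                  Finset.sum_congr rfl per_l
              _ = (1+q) * ∑ l ∈ range (2*k+1), ((2*k).choose l : ℝ) * (-1:ℝ)^l :=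
                  (Finset.mul_sum _ _ _).symm
              _ = 0 := by rw [altR (2*k) (by omega), mul_zero]
          rw [Finset.sum_sub_distrib, esum, sub_zero]
      _ = ∑ j ∈ range (N+1), ∑ l ∈ range (2*k+1),
            ((1+q) * (-1:ℝ)^l * (-1:ℝ)^j / (1 + q ^ ((h:ℝ)+(j:ℝ)))) *
              (((2*k).choose l : ℝ) * ((N-l).choose j : ℝ) * q^(N-l) / ((q-1)^(N-l) * q^j)) :=
          Finset.sum_comm
      _ = ∑ j ∈ range (N+1), ((1+q) * (-1:ℝ)^M * (-1:ℝ)^j / (1 + q ^ ((h:ℝ)+(j:ℝ)))) *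
            ∑ l ∈ range (2*k+1), ((2*k).choose l : ℝ) * ((N-l).choose j : ℝ) * q^(N-l) /
              ((1-q)^(N-l) * q^j) := by
          refine Finset.sum_congr rfl fun j _ => ?_
          rw [Finset.mul_sum]
          refine Finset.sum_congr rfl fun l hl => ?_
          have hl2k : l ≤ 2*k := Nat.lt_succ_iff.mp (mem_range.mp hl)
          have es : ((-1:ℝ))^M / (1-q)^(N-l) = (-1:ℝ)^l / (q-1)^(N-l) := by
            rw [div_eq_div_iff (pow_ne_zero _ h1q) (pow_ne_zero _ hq1'),
              show (q-1:ℝ) = -1*(1-q) by ring, mul_pow, ← mul_assoc, ← pow_add,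
              neg_one_pow_eq_pow_mod_two, show (M+(N-l)) % 2 = l % 2 by omega]
            conv_rhs => rw [neg_one_pow_eq_pow_mod_two l]
          calc ((1+q) * (-1:ℝ)^l * (-1:ℝ)^j / (1 + q ^ ((h:ℝ)+(j:ℝ)))) *
                (((2*k).choose l : ℝ) * ((N-l).choose j : ℝ) * q^(N-l) / ((q-1)^(N-l) * q^j))
              = ((1+q) * (-1:ℝ)^j / (1 + q ^ ((h:ℝ)+(j:ℝ))) *
                  (((2*k).choose l : ℝ) * ((N-l).choose j : ℝ) * q^(N-l) / q^j)) *
                ((-1:ℝ)^l / (q-1)^(N-l)) := by ring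
            _ = ((1+q) * (-1:ℝ)^j / (1 + q ^ ((h:ℝ)+(j:ℝ))) *
                  (((2*k).choose l : ℝ) * ((N-l).choose j : ℝ) * q^(N-l) / q^j)) *
                ((-1:ℝ)^M / (1-q)^(N-l)) := by rw [es]
            _ = ((1+q) * (-1:ℝ)^M * (-1:ℝ)^j / (1 + q ^ ((h:ℝ)+(j:ℝ)))) *
                (((2*k).choose l : ℝ) * ((N-l).choose j : ℝ) * q^(N-l) / ((1-q)^(N-l) * q^j)) := by
              ring

end Helpers

theorem statement8 (q : ℝ) (hq0 : 0 < q) (hq1 : q ≠ 1) (h : ℤ) (hh : 1 ≤ h)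
    (n₁ n₂ k : ℕ) (hk : 0 < k) (hnk : 2 * k < n₁ + n₂) :
    ∑ l ∈ Finset.range (n₁ + n₂ - 2 * k + 1), ((n₁ + n₂ - 2 * k).choose l : ℝ) * (-1 : ℝ) ^ l *
        hqGenocchi h q (l + 2 * k + 1) 0 / ((l : ℝ) + 2 * (k : ℝ) + 1) =
      ∑ l ∈ Finset.range (2 * k + 1), ((2 * k).choose l : ℝ) * (-1 : ℝ) ^ (2 * k + l) *
        ((1 + q) + q ^ ((h : ℝ) + 1) * hqGenocchi h q⁻¹ (n₁ + n₂ - l + 1) 0 /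
          ((n₁ : ℝ) + (n₂ : ℝ) - (l : ℝ) + 1)) := by
  have H := main q hq0 hq1 h (n₁ + n₂) k hk hnk
  have cast1 : ((n₁ + n₂ : ℕ) : ℝ) = (n₁:ℝ) + (n₂:ℝ) := by push_cast; ring
  rw [cast1] at H
  exact H
end

section
/- Let q be a real number with q > 0 and q ≠ 1, let h be an integer with h ≥ 1, let s be a natural number with s ≥ 2, let k be a natural number with k > 0, and let n₁, …, n_s be natural numbers with N := n₁ + ⋯ + n_s > s·k. Then Σ_{l=0}^{N-sk} binom(N-sk, l) · (-1)^l · G_{l+sk+1}^{(h)}(q)/(l+sk+1) = Σ_{l=0}^{sk} binom(sk,l) · (-1)^{sk+l} · ( (1+q) + q^{h+1} · G_{N-l+1}^{(h)}(q^{-1})/(N-l+1) ). -/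
namespace Stmt9

open Finset Polynomial

/-- Shift operator on real sequences. -/
noncomputable def Eop : Module.End ℝ (ℕ → ℝ) :=
  { toFun := fun f y => f (y + 1)
    map_add' := fun _ _ => rfl
    map_smul' := fun _ _ => rfl }

/-- Apply a polynomial in the shift operator to a sequence, evaluate at a point. -/
noncomputable def app (P : ℝ[X]) (f : ℕ → ℝ) (x : ℕ) : ℝ := Polynomial.aeval Eop P f x

lemma Eop_pow_apply (t : ℕ) (f : ℕ → ℝ) (x : ℕ) : (Eop ^ t) f x = f (x + t) := by
  induction t generalizing f x with
  | zero => simp [Eop]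
  | succ n ih =>
    rw [pow_succ, Module.End.mul_apply, ih]
    show f (x + n + 1) = f (x + (n + 1))
    congr 1

lemma app_mul (P Q : ℝ[X]) (f : ℕ → ℝ) (x : ℕ) :
    app (P * Q) f x = app P (fun y => app Q f y) x := by
  simp only [app, map_mul, Module.End.mul_apply]

lemma app_C_mul (s : ℝ) (P : ℝ[X]) (f : ℕ → ℝ) (x : ℕ) :
    app (C s * P) f x = s * app P f x := by
  simp only [app, map_mul, aeval_C, Module.End.mul_apply, Algebra.algebraMap_eq_smul_one,
    LinearMap.smul_apply, Module.End.one_apply, Pi.smul_apply, smul_eq_mul]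

lemma app_sum {ι : Type*} (S : Finset ι) (P : ι → ℝ[X]) (f : ℕ → ℝ) (x : ℕ) :
    app (∑ i ∈ S, P i) f x = ∑ i ∈ S, app (P i) f x := by
  simp only [app, map_sum, LinearMap.coe_sum, Finset.sum_apply]

lemma app_monomial (s : ℝ) (t : ℕ) (f : ℕ → ℝ) (x : ℕ) :
    app (C s * X ^ t) f x = s * f (x + t) := by
  rw [app_C_mul]
  simp only [app, aeval_X_pow]
  rw [Eop_pow_apply]

lemma app_binom (a b : ℝ) (p : ℕ) (f : ℕ → ℝ) (x : ℕ) :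
    app ((C a + C b * X) ^ p) f x
      = ∑ t ∈ range (p + 1), (p.choose t : ℝ) * a ^ (p - t) * b ^ t * f (x + t) := by
  have e : (C a + C b * X) ^ p
      = ∑ t ∈ range (p + 1), C ((p.choose t : ℝ) * a ^ (p - t) * b ^ t) * X ^ t := by
    rw [show C a + C b * X = C b * X + C a from by ring, add_pow]
    refine Finset.sum_congr rfl fun t _ => ?_
    rw [mul_pow, ← C_pow, ← C_pow]
    simp only [← C_eq_natCast, C_mul]
    ring
  rw [e, app_sum]
  exact Finset.sum_congr rfl fun t _ => app_monomial _ _ _ _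


/-- The basic sequence `t ↦ 1/(1+q^(h+t))`. -/
noncomputable def cc (h : ℤ) (q : ℝ) : ℕ → ℝ := fun t => 1 / (1 + q ^ ((h : ℝ) + (t : ℝ)))

lemma cc_denom_pos (h : ℤ) {q : ℝ} (hq0 : 0 < q) (t : ℕ) : 0 < 1 + q ^ ((h : ℝ) + (t : ℝ)) := by
  have := Real.rpow_pos_of_pos hq0 ((h : ℝ) + (t : ℝ)); linarith

lemma cc_rel (h : ℤ) {q : ℝ} (hq0 : 0 < q) (t : ℕ) :
    cc h q t = 1 - q ^ (h : ℝ) * q ^ t * cc h q t := by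
  have hpos := cc_denom_pos h hq0 t
  have hne : 1 + q ^ ((h : ℝ) + (t : ℝ)) ≠ 0 := ne_of_gt hpos
  have he : q ^ ((h : ℝ) + (t : ℝ)) = q ^ (h : ℝ) * q ^ t := by
    rw [Real.rpow_add hq0, Real.rpow_natCast]
  unfold cc
  rw [he] at hne ⊢
  field_simp
  ring

lemma alt0 {n : ℕ} (hn : n ≠ 0) :
    ∑ t ∈ range (n + 1), (n.choose t : ℝ) * (-1 : ℝ) ^ t = 0 := by
  have h1 := Int.alternating_sum_range_choose_of_ne hn
  have h2 : ((∑ m ∈ range (n + 1), ((-1) ^ m * n.choose m : ℤ) : ℤ) : ℝ) = 0 := by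
    rw [h1]; norm_num
  push_cast at h2
  rw [← h2]
  exact Finset.sum_congr rfl fun t _ => by ring

lemma app_binom2 (a b a' b' : ℝ) (p p' : ℕ) (f : ℕ → ℝ) :
    app ((C a + C b * X) ^ p * (C a' + C b' * X) ^ p') f 0
      = ∑ i ∈ range (p + 1), ∑ j ∈ range (p' + 1),
          (p.choose i : ℝ) * a ^ (p - i) * b ^ i *
            ((p'.choose j : ℝ) * a' ^ (p' - j) * b' ^ j) * f (i + j) := by
  rw [app_mul, app_binom]
  refine Finset.sum_congr rfl fun i _ => ?_
  simp only [Nat.zero_add]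
  rw [app_binom, Finset.mul_sum]
  refine Finset.sum_congr rfl fun j _ => by ring

/-- The core substitution identity. -/
lemma core (h : ℤ) {q : ℝ} (hq0 : 0 < q) (M m : ℕ) (hm : m ≠ 0) :
    app ((C q + C (-1) * X) ^ M * (C 1 + C (-1) * X) ^ m) (cc h q) 0
      = -(q ^ (h : ℝ) * q ^ M) *
        app ((C 1 + C (-q) * X) ^ m * (C 1 + C (-1) * X) ^ M) (cc h q) 0 := by
  rw [app_binom2, app_binom2]
  calc
    ∑ i ∈ range (M + 1), ∑ j ∈ range (m + 1),
        (M.choose i : ℝ) * q ^ (M - i) * (-1) ^ i *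
          ((m.choose j : ℝ) * 1 ^ (m - j) * (-1) ^ j) * cc h q (i + j)
      = ∑ i ∈ range (M + 1), ∑ j ∈ range (m + 1),
          ((M.choose i : ℝ) * q ^ (M - i) * (-1) ^ i *
            ((m.choose j : ℝ) * 1 ^ (m - j) * (-1) ^ j)
          - (M.choose i : ℝ) * q ^ (M - i) * (-1) ^ i *
            ((m.choose j : ℝ) * 1 ^ (m - j) * (-1) ^ j) *
              (q ^ (h : ℝ) * q ^ (i + j) * cc h q (i + j))) := by
        refine Finset.sum_congr rfl fun i _ => Finset.sum_congr rfl fun j _ => ?_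
        conv_lhs => rw [cc_rel h hq0 (i + j)]
        ring
    _ = (∑ i ∈ range (M + 1), ∑ j ∈ range (m + 1),
          (M.choose i : ℝ) * q ^ (M - i) * (-1) ^ i *
            ((m.choose j : ℝ) * 1 ^ (m - j) * (-1) ^ j))
        - ∑ i ∈ range (M + 1), ∑ j ∈ range (m + 1),
          (M.choose i : ℝ) * q ^ (M - i) * (-1) ^ i *
            ((m.choose j : ℝ) * 1 ^ (m - j) * (-1) ^ j) *
              (q ^ (h : ℝ) * q ^ (i + j) * cc h q (i + j)) := by
        rw [← Finset.sum_sub_distrib]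
        exact Finset.sum_congr rfl fun i _ => by rw [Finset.sum_sub_distrib]
    _ = - ∑ i ∈ range (M + 1), ∑ j ∈ range (m + 1),
          (M.choose i : ℝ) * q ^ (M - i) * (-1) ^ i *
            ((m.choose j : ℝ) * 1 ^ (m - j) * (-1) ^ j) *
              (q ^ (h : ℝ) * q ^ (i + j) * cc h q (i + j)) := by
        have hz : ∑ i ∈ range (M + 1), ∑ j ∈ range (m + 1),
            (M.choose i : ℝ) * q ^ (M - i) * (-1) ^ i *
              ((m.choose j : ℝ) * 1 ^ (m - j) * (-1) ^ j) = 0 := by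
          refine Finset.sum_eq_zero fun i _ => ?_
          have : ∑ j ∈ range (m + 1),
              ((M.choose i : ℝ) * q ^ (M - i) * (-1) ^ i) *
                ((m.choose j : ℝ) * 1 ^ (m - j) * (-1) ^ j) = 0 := by
            rw [← Finset.mul_sum]
            have : ∑ j ∈ range (m + 1), (m.choose j : ℝ) * 1 ^ (m - j) * (-1) ^ j
                = ∑ j ∈ range (m + 1), (m.choose j : ℝ) * (-1) ^ j := by
              exact Finset.sum_congr rfl fun j _ => by rw [one_pow, mul_one]
            rw [this, alt0 hm, mul_zero]
          rw [← this]
        rw [hz, zero_sub]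
    _ = -(q ^ (h : ℝ) * q ^ M) *
        ∑ i ∈ range (m + 1), ∑ j ∈ range (M + 1),
          (m.choose i : ℝ) * 1 ^ (m - i) * (-q) ^ i *
            ((M.choose j : ℝ) * 1 ^ (M - j) * (-1) ^ j) * cc h q (i + j) := by
        conv_rhs => rw [Finset.sum_comm]
        rw [Finset.mul_sum, ← Finset.sum_neg_distrib]
        refine Finset.sum_congr rfl fun i hi => ?_
        rw [Finset.mul_sum, ← Finset.sum_neg_distrib]
        refine Finset.sum_congr rfl fun j hj => ?_
        have hiM : i ≤ M := Nat.lt_succ_iff.mp (Finset.mem_range.mp hi)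
        have e2 : q ^ (i + j) = q ^ i * q ^ j := pow_add q i j
        have e3 : ((-q) : ℝ) ^ j = (-1 : ℝ) ^ j * q ^ j := by
          rw [neg_eq_neg_one_mul, mul_pow]
        have e4 : cc h q (i + j) = cc h q (j + i) := by rw [Nat.add_comm]
        have e5 : q ^ M = q ^ (M - i) * q ^ i := by rw [← pow_add]; congr 1; omega
        rw [e2, e3, e4, e5]
        ring

/-- Binomial transform of shifted applications. -/
lemma opL (a b v : ℝ) (M m : ℕ) (f : ℕ → ℝ) (x : ℕ) :
    ∑ l ∈ range (M + 1), (M.choose l : ℝ) * v ^ l * app ((C a + C b * X) ^ (l + m)) f x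
      = app ((C (1 + v * a) + C (v * b) * X) ^ M * (C a + C b * X) ^ m) f x := by
  have h1 : (C (1 + v * a) + C (v * b) * X : ℝ[X]) = C v * (C a + C b * X) + 1 := by
    simp only [C_add, C_mul, C_1]; ring
  have hpoly : ((C (1 + v * a) + C (v * b) * X) ^ M * (C a + C b * X) ^ m : ℝ[X])
      = ∑ l ∈ range (M + 1), C ((M.choose l : ℝ) * v ^ l) * (C a + C b * X) ^ (l + m) := by
    rw [h1, add_pow, Finset.sum_mul]
    refine Finset.sum_congr rfl fun l _ => ?_
    rw [mul_pow, one_pow, pow_add, C_mul, C_pow, C_eq_natCast]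
    ring
  rw [hpoly, app_sum]
  exact Finset.sum_congr rfl fun l _ => (app_C_mul _ _ _ _).symm

/-- `T` sum: `G_{p+1}/(p+1)` up to the factor `(1+q)/(1-q)^p`. -/
noncomputable def Tq (h : ℤ) (q : ℝ) (p : ℕ) : ℝ :=
  ∑ t ∈ range (p + 1), (p.choose t : ℝ) * (-1 : ℝ) ^ t * cc h q t

lemma T_app (h : ℤ) (q : ℝ) (p : ℕ) :
    Tq h q p = app ((C 1 + C (-1) * X) ^ p) (cc h q) 0 := by
  rw [Tq, app_binom]
  exact Finset.sum_congr rfl fun t _ => by rw [one_pow, Nat.zero_add]; ring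

lemma gen_eval (h : ℤ) (q : ℝ) (p : ℕ) :
    hqGenocchi h q (p + 1) 0 = ((p : ℝ) + 1) * (1 + q) / (1 - q) ^ p *
      ∑ t ∈ range (p + 1), (p.choose t : ℝ) * (-1 : ℝ) ^ t * (1 / (1 + q ^ ((h : ℝ) + (t : ℝ)))) := by
  unfold hqGenocchi
  rw [if_neg (Nat.succ_ne_zero p)]
  have e1 : (p + 1 - 1 : ℕ) = p := rfl
  rw [e1]
  push_cast
  congr 1
  refine Finset.sum_congr rfl fun t _ => ?_
  rw [mul_zero, Real.rpow_zero]
  ring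

lemma gen_eval_T (h : ℤ) (q : ℝ) (p : ℕ) :
    hqGenocchi h q (p + 1) 0 = ((p : ℝ) + 1) * (1 + q) / (1 - q) ^ p * Tq h q p := by
  rw [gen_eval, Tq]
  congr 1

lemma gen_inv_T (h : ℤ) {q : ℝ} (hq0 : 0 < q) (p : ℕ) (hp : p ≠ 0) :
    hqGenocchi h q⁻¹ (p + 1) 0
      = ((p : ℝ) + 1) * (1 + q⁻¹) / (1 - q⁻¹) ^ p * (-(Tq h q p)) := by
  rw [gen_eval]
  congr 1
  have hterm : ∀ t : ℕ, (1 : ℝ) / (1 + (q⁻¹) ^ ((h : ℝ) + (t : ℝ))) = 1 - cc h q t := by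
    intro t
    have hpos := cc_denom_pos h hq0 t
    have hne : 1 + q ^ ((h : ℝ) + (t : ℝ)) ≠ 0 := ne_of_gt hpos
    have hne2 : q ^ ((h : ℝ) + (t : ℝ)) ≠ 0 := ne_of_gt (Real.rpow_pos_of_pos hq0 _)
    have hpos2 : (0:ℝ) < 1 + (q ^ ((h : ℝ) + (t : ℝ)))⁻¹ := by positivity
    rw [Real.inv_rpow hq0.le]
    have hcc : cc h q t = 1 / (1 + q ^ ((h : ℝ) + (t : ℝ))) := rfl
    rw [hcc]
    field_simp
    ring
  calc ∑ t ∈ range (p + 1), (p.choose t : ℝ) * (-1:ℝ) ^ t * (1 / (1 + (q⁻¹) ^ ((h : ℝ) + (t : ℝ))))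
      = ∑ t ∈ range (p + 1),
          ((p.choose t : ℝ) * (-1:ℝ) ^ t - (p.choose t : ℝ) * (-1:ℝ) ^ t * cc h q t) := by
        refine Finset.sum_congr rfl fun t _ => ?_
        rw [hterm t]; ring
    _ = (∑ t ∈ range (p + 1), (p.choose t : ℝ) * (-1:ℝ) ^ t) - Tq h q p := by
        rw [Finset.sum_sub_distrib, Tq]
    _ = -(Tq h q p) := by rw [alt0 hp, zero_sub]

lemma main_key (h : ℤ) {q : ℝ} (hq0 : 0 < q) (hq1 : q ≠ 1) (M m : ℕ) (hm : m ≠ 0) :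
    ∑ l ∈ range (M + 1), (M.choose l : ℝ) * (-1 : ℝ) ^ l *
        ((1 + q) / (1 - q) ^ (l + m)) * Tq h q (l + m)
      = ∑ l ∈ range (m + 1), (m.choose l : ℝ) * (-1 : ℝ) ^ (m + l) *
          (q ^ ((h : ℝ) + 1) *
            ((1 + q⁻¹) / (1 - q⁻¹) ^ (M + m - l) * (-(Tq h q (M + m - l))))) := by
  have hqne : q ≠ 0 := ne_of_gt hq0
  have h1q : (1 : ℝ) - q ≠ 0 := sub_ne_zero.mpr (Ne.symm hq1)
  set r : ℝ := -(1 - q)⁻¹ with hr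
  have hs : r * (q - 1) = 1 := by rw [hr]; field_simp; ring
  have hinv : (1 - q⁻¹)⁻¹ = q * r := by
    refine inv_eq_of_mul_eq_one_right ?_
    rw [hr]; field_simp; ring
  set D2 : ℝ := app ((C 1 + C (-q) * X) ^ m * (C 1 + C (-1) * X) ^ M) (cc h q) 0 with hD2
  -- Left-hand side chain
  have L1 : ∑ l ∈ range (M + 1), (M.choose l : ℝ) * (-1 : ℝ) ^ l *
        ((1 + q) / (1 - q) ^ (l + m)) * Tq h q (l + m)
      = (1 + q) * ((1 - q)⁻¹) ^ m *
        ∑ l ∈ range (M + 1), (M.choose l : ℝ) * r ^ l *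
          app ((C 1 + C (-1) * X) ^ (l + m)) (cc h q) 0 := by
    rw [Finset.mul_sum]
    refine Finset.sum_congr rfl fun l _ => ?_
    rw [T_app]
    have e1 : ((1 : ℝ) + q) / (1 - q) ^ (l + m)
        = (1 + q) * ((1 - q)⁻¹) ^ l * ((1 - q)⁻¹) ^ m := by
      rw [div_eq_mul_inv, ← inv_pow, pow_add]; ring
    have e2 : r ^ l = (-1 : ℝ) ^ l * ((1 - q)⁻¹) ^ l := by rw [hr, neg_pow]
    rw [e1, e2]; ring
  have L2 : ∑ l ∈ range (M + 1), (M.choose l : ℝ) * r ^ l *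
        app ((C 1 + C (-1) * X) ^ (l + m)) (cc h q) 0
      = r ^ M * (-(q ^ (h : ℝ) * q ^ M) * D2) := by
    rw [opL 1 (-1) r M m (cc h q) 0]
    have e1 : (1 : ℝ) + r * 1 = r * q := by linear_combination -hs
    have e2 : (C (r * q) + C (r * (-1)) * X : ℝ[X]) = C r * (C q + C (-1) * X) := by
      rw [C_mul, C_mul]; ring
    rw [e1, e2, mul_pow, ← C_pow, mul_assoc, app_C_mul, core h hq0 M m hm, ← hD2]
  -- Right-hand side chain
  have R1 : ∑ l ∈ range (m + 1), (m.choose l : ℝ) * (-1 : ℝ) ^ (m + l) *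
        (q ^ ((h : ℝ) + 1) *
          ((1 + q⁻¹) / (1 - q⁻¹) ^ (M + m - l) * (-(Tq h q (M + m - l)))))
      = (-(q ^ ((h : ℝ) + 1) * (1 + q⁻¹) * (q * r) ^ M)) *
        ∑ l ∈ range (m + 1), (m.choose l : ℝ) * (-(q * r)) ^ l * Tq h q (M + l) := by
    have hrefl := Finset.sum_range_reflect
      (fun l => (-(q ^ ((h : ℝ) + 1) * (1 + q⁻¹) * (q * r) ^ M)) *
        ((m.choose l : ℝ) * (-(q * r)) ^ l * Tq h q (M + l))) (m + 1)
    rw [Finset.mul_sum, ← hrefl]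
    refine Finset.sum_congr rfl fun l hl => ?_
    have hlm : l ≤ m := Nat.lt_succ_iff.mp (Finset.mem_range.mp hl)
    have e0 : m + 1 - 1 - l = m - l := by omega
    have eidx : M + m - l = M + (m - l) := by omega
    rw [e0, eidx, Nat.choose_symm hlm]
    have e3 : ((1 : ℝ) + q⁻¹) / (1 - q⁻¹) ^ (M + (m - l))
        = (1 + q⁻¹) * ((q * r) ^ M * (q * r) ^ (m - l)) := by
      rw [div_eq_mul_inv, ← inv_pow, hinv, pow_add]
    have e4 : (-(q * r)) ^ (m - l) = (-1 : ℝ) ^ (m - l) * (q * r) ^ (m - l) := by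
      rw [neg_pow]
    have epar : (-1 : ℝ) ^ (m + l) = (-1 : ℝ) ^ (m - l) := by
      have e5 : m + l = (m - l) + 2 * l := by omega
      rw [e5, pow_add, pow_mul]; norm_num
    rw [e3, e4, epar]
    ring
  have R3 : ∑ l ∈ range (m + 1), (m.choose l : ℝ) * (-(q * r)) ^ l * Tq h q (M + l)
      = (-r) ^ m * D2 := by
    have ht : ∀ l, Tq h q (M + l) = app ((C 1 + C (-1) * X) ^ (l + M)) (cc h q) 0 := by
      intro l
      rw [T_app, Nat.add_comm]
    calc ∑ l ∈ range (m + 1), (m.choose l : ℝ) * (-(q * r)) ^ l * Tq h q (M + l)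
        = ∑ l ∈ range (m + 1), (m.choose l : ℝ) * (-(q * r)) ^ l *
            app ((C 1 + C (-1) * X) ^ (l + M)) (cc h q) 0 :=
          Finset.sum_congr rfl fun l _ => by rw [ht l]
      _ = app ((C (1 + -(q * r) * 1) + C (-(q * r) * (-1)) * X) ^ m *
            (C 1 + C (-1) * X) ^ M) (cc h q) 0 := opL 1 (-1) (-(q * r)) m M (cc h q) 0
      _ = (-r) ^ m * D2 := by
          have e1 : (1 : ℝ) + -(q * r) * 1 = -r * 1 := by linear_combination -hs
          have e2 : -(q * r) * (-1) = -r * (-q) := by ring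
          have e3 : (C (-r * 1) + C (-r * (-q)) * X : ℝ[X])
              = C (-r) * (C 1 + C (-q) * X) := by
            rw [C_mul, C_mul]; ring
          rw [e1, e2, e3, mul_pow, ← C_pow, mul_assoc, app_C_mul, ← hD2]
  rw [L1, L2, R1, R3]
  rw [Real.rpow_add_one hqne, mul_pow]
  have einv : ((1 : ℝ) - q)⁻¹ = -r := by rw [hr]; ring
  rw [einv]
  field_simp
  ring

end Stmt9

open Finset Stmt9 in
theorem statement9 (q : ℝ) (hq0 : 0 < q) (hq1 : q ≠ 1) (h : ℤ) (hh : 1 ≤ h)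
    (s : ℕ) (hs : 2 ≤ s) (k : ℕ) (hk : 0 < k) (n : Fin s → ℕ)
    (N : ℕ) (hN : N = ∑ i, n i) (hNk : s * k < N) :
    ∑ l ∈ Finset.range (N - s * k + 1), ((N - s * k).choose l : ℝ) * (-1 : ℝ) ^ l *
        hqGenocchi h q (l + s * k + 1) 0 / ((l : ℝ) + (s : ℝ) * (k : ℝ) + 1) =
      ∑ l ∈ Finset.range (s * k + 1), ((s * k).choose l : ℝ) * (-1 : ℝ) ^ (s * k + l) *
        ((1 + q) + q ^ ((h : ℝ) + 1) * hqGenocchi h q⁻¹ (N - l + 1) 0 / ((N : ℝ) - (l : ℝ) + 1)) := by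
  have hqne : q ≠ 0 := ne_of_gt hq0
  have h1q : (1 : ℝ) - q ≠ 0 := sub_ne_zero.mpr (Ne.symm hq1)
  have h1qi : (1 : ℝ) - q⁻¹ ≠ 0 := by
    refine sub_ne_zero.mpr (Ne.symm ?_)
    rwa [ne_eq, inv_eq_one]
  obtain ⟨M, rfl⟩ : ∃ M, N = M + s * k := ⟨N - s * k, by omega⟩
  simp only [Nat.add_sub_cancel]
  have hm : s * k ≠ 0 := by positivity
  calc
    ∑ l ∈ Finset.range (M + 1), (M.choose l : ℝ) * (-1 : ℝ) ^ l *
        hqGenocchi h q (l + s * k + 1) 0 / ((l : ℝ) + (s : ℝ) * (k : ℝ) + 1)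
      = ∑ l ∈ range (M + 1), (M.choose l : ℝ) * (-1 : ℝ) ^ l *
          ((1 + q) / (1 - q) ^ (l + s * k)) * Tq h q (l + s * k) := by
        refine Finset.sum_congr rfl fun l _ => ?_
        rw [gen_eval_T h q (l + s * k)]
        have hd : ((l : ℝ) + (s : ℝ) * (k : ℝ) + 1) = ((l + s * k : ℕ) : ℝ) + 1 := by
          push_cast; ring
        rw [hd]
        have hne : ((l + s * k : ℕ) : ℝ) + 1 ≠ 0 := by positivity
        have hpne : ((1 : ℝ) - q) ^ (l + s * k) ≠ 0 := pow_ne_zero _ h1q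
        field_simp
    _ = ∑ l ∈ range (s * k + 1), ((s * k).choose l : ℝ) * (-1 : ℝ) ^ (s * k + l) *
          (q ^ ((h : ℝ) + 1) *
            ((1 + q⁻¹) / (1 - q⁻¹) ^ (M + s * k - l) * (-(Tq h q (M + s * k - l))))) :=
        main_key h hq0 hq1 M (s * k) hm
    _ = ∑ l ∈ range (s * k + 1),
          (((s * k).choose l : ℝ) * (-1 : ℝ) ^ (s * k + l) * (1 + q)
           + ((s * k).choose l : ℝ) * (-1 : ℝ) ^ (s * k + l) *
              (q ^ ((h : ℝ) + 1) * hqGenocchi h q⁻¹ (M + s * k - l + 1) 0 /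
                (((M + s * k : ℕ) : ℝ) - (l : ℝ) + 1))) := by
        rw [Finset.sum_add_distrib]
        have hz : ∑ l ∈ range (s * k + 1),
            (((s * k).choose l : ℝ) * (-1 : ℝ) ^ (s * k + l) * (1 + q)) = 0 := by
          have he : ∀ l, ((s * k).choose l : ℝ) * (-1 : ℝ) ^ (s * k + l) * (1 + q)
              = ((1 + q) * (-1 : ℝ) ^ (s * k)) * (((s * k).choose l : ℝ) * (-1 : ℝ) ^ l) := by
            intro l; rw [pow_add]; ring
          rw [Finset.sum_congr rfl fun l _ => he l, ← Finset.mul_sum, alt0 hm, mul_zero]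
        rw [hz, zero_add]
        refine Finset.sum_congr rfl fun l hl => ?_
        have hlm : l ≤ s * k := Nat.lt_succ_iff.mp (Finset.mem_range.mp hl)
        have hMpos : M ≠ 0 := by omega
        have hp : M + s * k - l ≠ 0 := by omega
        rw [gen_inv_T h hq0 _ hp]
        have hd : (((M + s * k : ℕ)) : ℝ) - (l : ℝ) + 1 = ((M + s * k - l : ℕ) : ℝ) + 1 := by
          push_cast [Nat.cast_sub (show l ≤ M + s * k by omega)]
          ring
        rw [hd]
        have hne : ((M + s * k - l : ℕ) : ℝ) + 1 ≠ 0 := by positivity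
        have key2 : ∀ (Q u C T P : ℝ), P ≠ 0 → (Q * (P * u / C * T)) / P = Q * (u / C * T) := by
          intro Q u C T P hP
          rw [div_eq_iff hP]; ring
        rw [key2 _ _ _ _ _ hne]
    _ = ∑ l ∈ Finset.range (s * k + 1), ((s * k).choose l : ℝ) * (-1 : ℝ) ^ (s * k + l) *
          ((1 + q) + q ^ ((h : ℝ) + 1) * hqGenocchi h q⁻¹ (M + s * k - l + 1) 0 /
            (((M + s * k : ℕ) : ℝ) - (l : ℝ) + 1)) :=
        Finset.sum_congr rfl fun l _ => by ring
end

section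
/- Let q be a real number with 0 < q < 1, let h be an integer with h ≥ 1, let x be a real number with x > 0, let s be a complex number, and let a, b be odd positive integers. Then ([2]_{q^b} / [a]_q^s) · Σ_{i=0}^{a-1} (-1)^i · q^{ibh} · ζ_{q^a}^{(h)}(s, bx + bi/a) = ([2]_{q^a} / [b]_q^s) · Σ_{i=0}^{b-1} (-1)^i · q^{iah} · ζ_{q^b}^{(h)}(s, ax + ai/b). -/
/-- The (h,q)-zeta function `ζ_q^{(h)}(s,x) = (1+q) ∑_{m=0}^∞ (-1)^m q^{mh} [m+x]_q^{-s}`,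
where the power with complex exponent is a complex power of the positive real base. -/
noncomputable def hqZeta (h : ℤ) (q : ℝ) (s : ℂ) (x : ℝ) : ℂ :=
  (1 + (q : ℂ)) * ∑' m : ℕ, (-1 : ℂ) ^ m * ((q ^ ((m : ℝ) * (h : ℝ)) : ℝ) : ℂ) *
    ((qnum q ((m : ℝ) + x) : ℝ) : ℂ) ^ (-s)

lemma qnum_pos {q : ℝ} (hq0 : 0 < q) (hq1 : q < 1) {t : ℝ} (ht : 0 < t) : 0 < qnum q t := by
  have h1 : q ^ t < 1 := Real.rpow_lt_one hq0.le hq1 ht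
  have h2 : (0:ℝ) < 1 - q := by linarith
  exact div_pos (by linarith) h2

lemma qnum_le {q : ℝ} (hq0 : 0 < q) (hq1 : q < 1) (t : ℝ) : qnum q t ≤ 1 / (1 - q) := by
  have h1 : 0 ≤ q ^ t := (Real.rpow_pos_of_pos hq0 t).le
  have h2 : (0:ℝ) < 1 - q := by linarith
  unfold qnum; gcongr; linarith

lemma qnum_mono {q : ℝ} (hq0 : 0 < q) (hq1 : q < 1) {t t' : ℝ} (htt : t ≤ t') :
    qnum q t ≤ qnum q t' := by
  have h1 : q ^ t' ≤ q ^ t := Real.rpow_le_rpow_of_exponent_ge hq0 hq1.le htt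
  have h2 : (0:ℝ) < 1 - q := by linarith
  unfold qnum; gcongr

/-- Auxiliary summand. -/
noncomputable def Faux (q : ℝ) (h : ℤ) (s : ℂ) (y : ℝ) (n : ℕ) : ℂ :=
  (-1 : ℂ) ^ n * ((q ^ ((n : ℝ) * (h : ℝ)) : ℝ) : ℂ) * ((qnum q (y + n) : ℝ) : ℂ) ^ (-s)

/-- Division-with-remainder equivalence between `Fin a × ℕ` and `Fin b × ℕ`. -/
def dmEquiv (a b : ℕ) (ha : 0 < a) (hb : 0 < b) : Fin a × ℕ ≃ Fin b × ℕ where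
  toFun p := (⟨p.2 % b, Nat.mod_lt _ hb⟩, a * (p.2 / b) + p.1)
  invFun p := (⟨p.2 % a, Nat.mod_lt _ ha⟩, b * (p.2 / a) + p.1)
  left_inv := by
    rintro ⟨⟨i, hi⟩, m⟩
    have h1 : (a * (m / b) + i) % a = i := by
      rw [Nat.mul_add_mod, Nat.mod_eq_of_lt hi]
    have h2 : (a * (m / b) + i) / a = m / b := by
      rw [Nat.mul_add_div ha, Nat.div_eq_of_lt hi, add_zero]
    simp [h1, h2, Nat.div_add_mod]
  right_inv := by
    rintro ⟨⟨j, hj⟩, m⟩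
    have h1 : (b * (m / a) + j) % b = j := by
      rw [Nat.mul_add_mod, Nat.mod_eq_of_lt hj]
    have h2 : (b * (m / a) + j) / b = m / a := by
      rw [Nat.mul_add_div hb, Nat.div_eq_of_lt hj, add_zero]
    simp [h1, h2, Nat.div_add_mod]

lemma core {f : ℕ → ℂ} {a b : ℕ} (ha : 0 < a) (hb : 0 < b)
    (hsum : Summable (fun p : Fin a × ℕ => f (a * p.2 + b * p.1))) :
    ∑ i ∈ Finset.range a, ∑' m : ℕ, f (a * m + b * i)
      = ∑ j ∈ Finset.range b, ∑' m : ℕ, f (b * m + a * j) := by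
  have key : ∀ p : Fin a × ℕ,
      (fun p' : Fin b × ℕ => f (b * p'.2 + a * p'.1)) (dmEquiv a b ha hb p)
        = f (a * p.2 + b * p.1) := by
    rintro ⟨⟨i, hi⟩, m⟩
    simp only [dmEquiv, Equiv.coe_fn_mk]
    congr 1
    have hm := Nat.div_add_mod m b
    calc b * (a * (m / b) + i) + a * (m % b)
        = a * (b * (m / b) + m % b) + b * i := by ring
      _ = a * m + b * i := by rw [hm]
  have hsum' : Summable (fun p' : Fin b × ℕ => f (b * p'.2 + a * p'.1)) := by
    rw [← (dmEquiv a b ha hb).summable_iff]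
    exact hsum.congr fun p => (key p).symm
  calc ∑ i ∈ Finset.range a, ∑' m : ℕ, f (a * m + b * i)
      = ∑ i : Fin a, ∑' m : ℕ, f (a * m + b * (i : ℕ)) :=
        (Fin.sum_univ_eq_sum_range (fun i => ∑' m : ℕ, f (a * m + b * i)) a).symm
    _ = ∑' i : Fin a, ∑' m : ℕ, f (a * m + b * (i : ℕ)) := (tsum_fintype _).symm
    _ = ∑' p : Fin a × ℕ, f (a * p.2 + b * p.1) := (Summable.tsum_prod' hsum hsum.prod_factor).symm
    _ = ∑' p : Fin b × ℕ, f (b * p.2 + a * p.1) := by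
        rw [← Equiv.tsum_eq (dmEquiv a b ha hb) (fun p' : Fin b × ℕ => f (b * p'.2 + a * p'.1))]
        exact tsum_congr fun p => (key p).symm
    _ = ∑' j : Fin b, ∑' m : ℕ, f (b * m + a * (j : ℕ)) := Summable.tsum_prod' hsum' hsum'.prod_factor
    _ = ∑ j : Fin b, ∑' m : ℕ, f (b * m + a * (j : ℕ)) := tsum_fintype _
    _ = ∑ j ∈ Finset.range b, ∑' m : ℕ, f (b * m + a * j) :=
        Fin.sum_univ_eq_sum_range (fun j => ∑' m : ℕ, f (b * m + a * j)) b

lemma summable_aux {q : ℝ} (hq0 : 0 < q) (hq1 : q < 1) (h : ℤ) (hh : 1 ≤ h) (s : ℂ)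
    {y : ℝ} (hy : 0 < y) (a b : ℕ) (ha : 0 < a) :
    Summable (fun p : Fin a × ℕ => Faux q h s y (a * p.2 + b * p.1)) := by
  have hq2 : (0:ℝ) < 1 - q := by linarith
  set r : ℝ := q ^ (h : ℝ) with hr
  have hr0 : 0 < r := Real.rpow_pos_of_pos hq0 _
  have hr1 : r < 1 := Real.rpow_lt_one hq0.le hq1 (by exact_mod_cast hh.trans_lt' zero_lt_one)
  set C : ℝ := max (qnum q y ^ (-s.re)) ((1 / (1 - q)) ^ (-s.re)) with hC
  have hC0 : 0 ≤ C := le_max_of_le_left (Real.rpow_nonneg (qnum_pos hq0 hq1 hy).le _)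
  have hbound : ∀ n : ℕ, ‖Faux q h s y n‖ ≤ C * r ^ n := by
    intro n
    have hz : 0 < qnum q (y + n) := qnum_pos hq0 hq1 (by positivity)
    have h1 : ‖Faux q h s y n‖ = q ^ ((n : ℝ) * (h : ℝ)) * qnum q (y + n) ^ (-s.re) := by
      unfold Faux
      rw [norm_mul, norm_mul, norm_pow, norm_neg, norm_one, one_pow, one_mul,
        Complex.norm_real, Real.norm_eq_abs,
        abs_of_nonneg (Real.rpow_pos_of_pos hq0 _).le,
        Complex.norm_cpow_eq_rpow_re_of_pos hz]
      simp [Complex.neg_re]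
    rw [h1]
    have h2 : q ^ ((n : ℝ) * (h : ℝ)) = r ^ n := by
      rw [hr, ← Real.rpow_natCast (q ^ (h:ℝ)) n, ← Real.rpow_mul hq0.le]
      ring_nf
    have h3 : qnum q (y + n) ^ (-s.re) ≤ C := by
      rcases le_or_gt 0 (-s.re) with hc | hc
      · refine le_max_of_le_right ?_
        exact Real.rpow_le_rpow hz.le ((qnum_le hq0 hq1 _)) hc
      · refine le_max_of_le_left ?_
        exact Real.rpow_le_rpow_of_nonpos (qnum_pos hq0 hq1 hy)
          (qnum_mono hq0 hq1 (le_add_of_nonneg_right (Nat.cast_nonneg _))) hc.le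
    calc q ^ ((n : ℝ) * (h : ℝ)) * qnum q (y + n) ^ (-s.re)
        ≤ r ^ n * C := by
          rw [h2]; exact mul_le_mul_of_nonneg_left h3 (pow_nonneg hr0.le n)
      _ = C * r ^ n := mul_comm _ _
  apply Summable.of_norm
  have hmaj : Summable (fun p : Fin a × ℕ => C * r ^ p.2) := by
    have : Summable (fun i : Fin a => C) := summable_of_finite_support (Set.toFinite _)
    exact this.mul_of_nonneg (summable_geometric_of_lt_one hr0.le hr1)
      (fun _ => hC0) (fun n => pow_nonneg hr0.le n)
  refine Summable.of_nonneg_of_le (fun p => norm_nonneg _) (fun p => ?_) hmaj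
  refine (hbound _).trans ?_
  have hle : p.2 ≤ a * p.2 + b * (p.1 : ℕ) :=
    le_add_right (Nat.le_mul_of_pos_left _ ha)
  exact mul_le_mul_of_nonneg_left (pow_le_pow_of_le_one hr0.le hr1.le hle) hC0

lemma cpow_div_aux {u v : ℝ} (hu : 0 < u) (hv : 0 < v) (s : ℂ) :
    ((u / v : ℝ) : ℂ) ^ (-s) = ((v : ℝ) : ℂ) ^ s * ((u : ℝ) : ℂ) ^ (-s) := by
  have hvne : ((v : ℝ) : ℂ) ≠ 0 := by exact_mod_cast hv.ne'
  have h1 : ((u : ℝ) : ℂ) ^ (-s) = ((u / v : ℝ) : ℂ) ^ (-s) * ((v : ℝ) : ℂ) ^ (-s) := by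
    rw [← Complex.mul_cpow_ofReal_nonneg (by positivity) hv.le]
    congr 1
    push_cast
    field_simp
  have hvs : ((v : ℝ) : ℂ) ^ s ≠ 0 := by
    rw [Ne, Complex.cpow_eq_zero_iff]
    push_neg
    intro h0
    exact absurd h0 hvne
  have hvns : ((v : ℝ) : ℂ) ^ (-s) * ((v : ℝ) : ℂ) ^ s = 1 := by
    rw [Complex.cpow_neg, inv_mul_cancel₀ hvs]
  calc ((u / v : ℝ) : ℂ) ^ (-s)
      = ((u / v : ℝ) : ℂ) ^ (-s) * (((v : ℝ) : ℂ) ^ (-s) * ((v : ℝ) : ℂ) ^ s) := by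
        rw [hvns, mul_one]
    _ = ((u : ℝ) : ℂ) ^ (-s) * ((v : ℝ) : ℂ) ^ s := by rw [← mul_assoc, ← h1]
    _ = _ := mul_comm _ _

lemma point {q : ℝ} (hq0 : 0 < q) (hq1 : q < 1) (h : ℤ) (s : ℂ) {x : ℝ} (hx : 0 < x)
    (a b : ℕ) (ha : 0 < a) (hao : Odd a) (hbo : Odd b) (i m : ℕ) :
    (-1 : ℂ) ^ i * ((q ^ ((i : ℝ) * (b : ℝ) * (h : ℝ)) : ℝ) : ℂ) *
      ((-1 : ℂ) ^ m * (((q ^ a : ℝ) ^ ((m : ℝ) * (h : ℝ)) : ℝ) : ℂ) *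
        ((qnum (q ^ a) ((m : ℝ) + ((b : ℝ) * x + (b : ℝ) * (i : ℝ) / (a : ℝ))) : ℝ) : ℂ) ^ (-s))
    = ((qnum q a : ℝ) : ℂ) ^ s * Faux q h s ((a : ℝ) * (b : ℝ) * x) (a * m + b * i) := by
  have hA : (0:ℝ) < (a:ℝ) := by exact_mod_cast ha
  have hq2 : (0:ℝ) < 1 - q := by linarith
  have hqa1 : q ^ (a:ℝ) < 1 := Real.rpow_lt_one hq0.le hq1 hA
  have hsign : (-1 : ℂ) ^ i * (-1 : ℂ) ^ m = (-1 : ℂ) ^ (a * m + b * i) := by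
    rw [pow_add, pow_mul, pow_mul, hao.neg_one_pow, hbo.neg_one_pow, mul_comm]
  have hqpow : q ^ ((i : ℝ) * (b : ℝ) * (h : ℝ)) * (q ^ a : ℝ) ^ ((m : ℝ) * (h : ℝ))
      = q ^ (((a * m + b * i : ℕ) : ℝ) * (h : ℝ)) := by
    rw [← Real.rpow_natCast q a, ← Real.rpow_mul hq0.le, ← Real.rpow_add hq0]
    congr 1
    push_cast
    ring
  have hznum : qnum (q ^ a) ((m : ℝ) + ((b : ℝ) * x + (b : ℝ) * (i : ℝ) / (a : ℝ)))
      = qnum q ((a : ℝ) * (b : ℝ) * x + ((a * m + b * i : ℕ) : ℝ)) / qnum q (a : ℝ) := by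
    have harg : (a:ℝ) * ((m : ℝ) + ((b : ℝ) * x + (b : ℝ) * (i : ℝ) / (a : ℝ)))
        = (a : ℝ) * (b : ℝ) * x + ((a * m + b * i : ℕ) : ℝ) := by
      push_cast
      field_simp
      ring
    unfold qnum
    rw [← Real.rpow_natCast q a, ← Real.rpow_mul hq0.le, harg]
    have hne1 : (1 - q : ℝ) ≠ 0 := by linarith
    have hne2 : (1 - q ^ (a:ℝ) : ℝ) ≠ 0 := by linarith
    field_simp
  have hB : (0:ℝ) ≤ (b:ℝ) := Nat.cast_nonneg b
  have hu : 0 < qnum q ((a : ℝ) * (b : ℝ) * x + ((a * m + b * i : ℕ) : ℝ)) := by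
    apply qnum_pos hq0 hq1
    have hn : (0:ℝ) ≤ ((a * m + b * i : ℕ) : ℝ) := Nat.cast_nonneg _
    have hBpos : (0:ℝ) < (b:ℝ) := by exact_mod_cast hbo.pos
    nlinarith [mul_pos (mul_pos hA hBpos) hx]
  have hv : 0 < qnum q (a : ℝ) := qnum_pos hq0 hq1 hA
  rw [hznum, cpow_div_aux hu hv s]
  unfold Faux
  have hq12 : ((q ^ (((a * m + b * i : ℕ) : ℝ) * (h : ℝ)) : ℝ) : ℂ)
      = ((q ^ ((i : ℝ) * (b : ℝ) * (h : ℝ)) : ℝ) : ℂ) *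
        (((q ^ a : ℝ) ^ ((m : ℝ) * (h : ℝ)) : ℝ) : ℂ) := by
    rw [← hqpow]
    push_cast
    ring
  rw [hq12, ← hsign]
  ring

lemma side {q : ℝ} (hq0 : 0 < q) (hq1 : q < 1) (h : ℤ) (hh : 1 ≤ h)
    {x : ℝ} (hx : 0 < x) (s : ℂ) (a b : ℕ) (ha : 0 < a) (hb : 0 < b)
    (hao : Odd a) (hbo : Odd b) :
    ((1 + q ^ b : ℝ) : ℂ) / ((qnum q a : ℝ) : ℂ) ^ s *
        ∑ i ∈ Finset.range a, (-1 : ℂ) ^ i * ((q ^ ((i : ℝ) * (b : ℝ) * (h : ℝ)) : ℝ) : ℂ) *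
          hqZeta h (q ^ a) s ((b : ℝ) * x + (b : ℝ) * (i : ℝ) / (a : ℝ))
    = ((1 + q ^ a : ℝ) : ℂ) * ((1 + q ^ b : ℝ) : ℂ) *
        ∑ i ∈ Finset.range a, ∑' m : ℕ, Faux q h s ((a : ℝ) * (b : ℝ) * x) (a * m + b * i) := by
  have hA : (0:ℝ) < (a:ℝ) := by exact_mod_cast ha
  have hv : 0 < qnum q (a:ℝ) := qnum_pos hq0 hq1 hA
  have hvne : ((qnum q (a:ℝ) : ℝ) : ℂ) ≠ 0 := by exact_mod_cast hv.ne'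
  have hcs : ((qnum q (a:ℝ) : ℝ) : ℂ) ^ s ≠ 0 := by
    rw [Ne, Complex.cpow_eq_zero_iff]
    push_neg
    intro h0
    exact absurd h0 hvne
  have hterm : ∀ i ∈ Finset.range a,
      (-1 : ℂ) ^ i * ((q ^ ((i : ℝ) * (b : ℝ) * (h : ℝ)) : ℝ) : ℂ) *
          hqZeta h (q ^ a) s ((b : ℝ) * x + (b : ℝ) * (i : ℝ) / (a : ℝ))
        = (1 + ((q ^ a : ℝ) : ℂ)) * (((qnum q (a:ℝ) : ℝ) : ℂ) ^ s *
            ∑' m : ℕ, Faux q h s ((a : ℝ) * (b : ℝ) * x) (a * m + b * i)) := by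
    intro i _
    unfold hqZeta
    rw [show ∀ z w u : ℂ, z * w * (u * (∑' m : ℕ, (-1 : ℂ) ^ m *
        (((q^a : ℝ) ^ ((m : ℝ) * (h : ℝ)) : ℝ) : ℂ) *
        ((qnum (q^a) ((m : ℝ) + ((b : ℝ) * x + (b : ℝ) * (i : ℝ) / (a : ℝ))) : ℝ) : ℂ) ^ (-s)))
        = u * ∑' m : ℕ, (z * w) * ((-1 : ℂ) ^ m *
        (((q^a : ℝ) ^ ((m : ℝ) * (h : ℝ)) : ℝ) : ℂ) *
        ((qnum (q^a) ((m : ℝ) + ((b : ℝ) * x + (b : ℝ) * (i : ℝ) / (a : ℝ))) : ℝ) : ℂ) ^ (-s))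
      from fun z w u => by rw [tsum_mul_left]; ring]
    rw [tsum_congr (fun m => point hq0 hq1 h s hx a b ha hao hbo i m)]
    rw [tsum_mul_left]
  rw [Finset.sum_congr rfl hterm, ← Finset.mul_sum, ← Finset.mul_sum]
  push_cast
  field_simp

theorem statement10 (q : ℝ) (hq0 : 0 < q) (hq1 : q < 1) (h : ℤ) (hh : 1 ≤ h)
    (x : ℝ) (hx : 0 < x) (s : ℂ) (a b : ℕ) (ha : 0 < a) (hb : 0 < b)
    (hao : Odd a) (hbo : Odd b) :
    ((1 + q ^ b : ℝ) : ℂ) / ((qnum q a : ℝ) : ℂ) ^ s *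
        ∑ i ∈ Finset.range a, (-1 : ℂ) ^ i * ((q ^ ((i : ℝ) * (b : ℝ) * (h : ℝ)) : ℝ) : ℂ) *
          hqZeta h (q ^ a) s ((b : ℝ) * x + (b : ℝ) * (i : ℝ) / (a : ℝ)) =
      ((1 + q ^ a : ℝ) : ℂ) / ((qnum q b : ℝ) : ℂ) ^ s *
        ∑ i ∈ Finset.range b, (-1 : ℂ) ^ i * ((q ^ ((i : ℝ) * (a : ℝ) * (h : ℝ)) : ℝ) : ℂ) *
          hqZeta h (q ^ b) s ((a : ℝ) * x + (a : ℝ) * (i : ℝ) / (b : ℝ)) := by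
  rw [side hq0 hq1 h hh hx s a b ha hb hao hbo,
      side hq0 hq1 h hh hx s b a hb ha hbo hao]
  have hswap : (b : ℝ) * (a : ℝ) * x = (a : ℝ) * (b : ℝ) * x := by ring
  rw [hswap]
  have hy : 0 < (a : ℝ) * (b : ℝ) * x := by positivity
  rw [core ha hb (summable_aux hq0 hq1 h hh s hy a b ha)]
  ring
end

section
/- Let q be a real number with 0 < q < 1, let h be an integer with h ≥ 1, let x be a real number with x > 0, and let n be a natural number. Then ζ_q^{(h)}(-n, x) = G_{n+1}^{(h)}(x|q)/(n+1). -/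
theorem statement12 (q : ℝ) (hq0 : 0 < q) (hq1 : q < 1) (h : ℤ) (hh : 1 ≤ h)
    (x : ℝ) (hx : 0 < x) (n : ℕ) :
    hqZeta h q (-(n : ℂ)) x = ((hqGenocchi h q (n + 1) x / ((n : ℝ) + 1) : ℝ) : ℂ) := by
  have hq0' : (0:ℝ) ≤ q := le_of_lt hq0
  have h1q : (0:ℝ) < 1 - q := by linarith
  have h1qn : ((1:ℝ) - q) ^ n ≠ 0 := pow_ne_zero _ (ne_of_gt h1q)
  -- properties of r k = q ^ (h + k)
  have hrpos : ∀ k : ℕ, 0 < q ^ ((h:ℝ) + (k:ℝ)) := fun k => Real.rpow_pos_of_pos hq0 _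
  have hrlt : ∀ k : ℕ, q ^ ((h:ℝ) + (k:ℝ)) < 1 := by
    intro k
    apply Real.rpow_lt_one hq0' hq1
    have : (1:ℝ) ≤ (h:ℝ) := by exact_mod_cast hh
    positivity
  have hrne : ∀ k : ℕ, (1:ℝ) + q ^ ((h:ℝ) + (k:ℝ)) ≠ 0 := by
    intro k; have := hrpos k; positivity
  -- the real-valued term
  set g : ℕ → ℝ := fun m => (-1:ℝ)^m * q ^ ((m:ℝ) * (h:ℝ)) *
      ((1 - q ^ ((m:ℝ) + x)) / (1 - q)) ^ n with hgdef
  -- termwise expansion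
  have hg : ∀ m : ℕ, g m = ∑ k ∈ Finset.range (n+1),
      ((n.choose k : ℝ) * (-1:ℝ)^k * q ^ ((k:ℝ) * x) / (1 - q) ^ n) *
        (-(q ^ ((h:ℝ) + (k:ℝ))))^m := by
    intro m
    have hbin : (1 - q ^ ((m:ℝ) + x)) ^ n
        = ∑ k ∈ Finset.range (n+1), (-(q ^ ((m:ℝ) + x)))^k * 1^(n-k) * (n.choose k : ℝ) := by
      rw [sub_eq_add_neg, add_comm, add_pow]
    rw [hgdef]
    simp only [div_pow, hbin, Finset.sum_div, Finset.mul_sum, Finset.sum_div]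
    refine Finset.sum_congr rfl fun k _ => ?_
    have e1 : (-(q ^ ((m:ℝ) + x)))^k = (-1:ℝ)^k * q ^ (((m:ℝ) + x) * (k:ℝ)) := by
      rw [neg_pow, ← Real.rpow_natCast (q ^ ((m:ℝ)+x)) k, ← Real.rpow_mul hq0']
    have e2 : (-(q ^ ((h:ℝ) + (k:ℝ))))^m = (-1:ℝ)^m * q ^ (((h:ℝ) + (k:ℝ)) * (m:ℝ)) := by
      rw [neg_pow, ← Real.rpow_natCast (q ^ ((h:ℝ)+(k:ℝ))) m, ← Real.rpow_mul hq0']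
    rw [e1, e2]
    have e3 : q ^ ((m:ℝ) * (h:ℝ)) * q ^ (((m:ℝ) + x) * (k:ℝ))
        = q ^ ((k:ℝ) * x) * q ^ (((h:ℝ) + (k:ℝ)) * (m:ℝ)) := by
      rw [← Real.rpow_add hq0, ← Real.rpow_add hq0]; ring_nf
    rw [one_pow]
    field_simp
    have e4 : q ^ (x * (k:ℝ)) * q ^ ((m:ℝ) * ((h:ℝ) + (k:ℝ)))
        = q ^ ((k:ℝ) * x) * q ^ (((h:ℝ) + (k:ℝ)) * (m:ℝ)) := by
      ring_nf
    linear_combination (n.choose k : ℝ) * e3 - (n.choose k : ℝ) * e4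
  -- reduce complex statement to real statement
  have hterm : ∀ m : ℕ, (-1 : ℂ) ^ m * ((q ^ ((m : ℝ) * (h : ℝ)) : ℝ) : ℂ) *
      ((qnum q ((m : ℝ) + x) : ℝ) : ℂ) ^ (-(-(n:ℂ))) = ((g m : ℝ) : ℂ) := by
    intro m
    rw [neg_neg, Complex.cpow_natCast, hgdef]
    unfold qnum
    push_cast
    ring
  have hsummand : ∀ k : ℕ, Summable (fun m : ℕ =>
      ((n.choose k : ℝ) * (-1:ℝ)^k * q ^ ((k:ℝ) * x) / (1 - q) ^ n) *
        (-(q ^ ((h:ℝ) + (k:ℝ))))^m) := by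
    intro k
    apply Summable.mul_left
    apply summable_geometric_of_norm_lt_one
    rw [norm_neg, Real.norm_eq_abs, abs_of_pos (hrpos k)]
    exact hrlt k
  have hreal : (1 + q) * ∑' m : ℕ, g m = hqGenocchi h q (n + 1) x / ((n : ℝ) + 1) := by
    have hts : ∑' m : ℕ, g m = ∑ k ∈ Finset.range (n+1),
        ((n.choose k : ℝ) * (-1:ℝ)^k * q ^ ((k:ℝ) * x) / (1 - q) ^ n) *
          (1 + q ^ ((h:ℝ) + (k:ℝ)))⁻¹ := by
      rw [tsum_congr hg, Summable.tsum_finsetSum (fun k _ => hsummand k)]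
      refine Finset.sum_congr rfl fun k _ => ?_
      rw [tsum_mul_left, tsum_geometric_of_norm_lt_one
        (by rw [norm_neg, Real.norm_eq_abs, abs_of_pos (hrpos k)]; exact hrlt k)]
      ring_nf
    rw [hts]
    unfold hqGenocchi
    rw [if_neg (Nat.succ_ne_zero n), Nat.add_sub_cancel]
    push_cast
    rw [Finset.mul_sum, Finset.mul_sum, Finset.sum_div]
    refine Finset.sum_congr rfl fun k _ => ?_
    have hne : ((n:ℝ) + 1) ≠ 0 := by positivity
    field_simp
  calc hqZeta h q (-(n:ℂ)) x
      = (1 + (q:ℂ)) * ∑' m : ℕ, ((g m : ℝ) : ℂ) := by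
        unfold hqZeta; rw [tsum_congr hterm]
    _ = (((1 + q) * ∑' m : ℕ, g m : ℝ) : ℂ) := by
        rw [← Complex.ofReal_tsum]; push_cast; ring
    _ = _ := by rw [hreal]
end

section
/- Let q be a real number with 0 < q < 1, let h be an integer with h ≥ 1, let x be a real number with x > 0, let m be a natural number with m ≥ 1, and let a, b be odd positive integers. Then [2]_{q^b} · [a]_q^{m-1} · Σ_{i=0}^{a-1} (-1)^i · q^{ibh} · G_m^{(h)}(bx + bi/a | q^a) = [2]_{q^a} · [b]_q^{m-1} · Σ_{i=0}^{b-1} (-1)^i · q^{iah} · G_m^{(h)}(ax + ai/b | q^b). -/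
lemma key_s13 (q : ℝ) (hq0 : 0 < q) (hq1 : q < 1) (h : ℤ) (x : ℝ) (m : ℕ) (hm : 1 ≤ m)
    (a b : ℕ) (ha : 0 < a) (hao : Odd a) :
    (1 + q ^ b) * (qnum q a) ^ (m - 1) *
        ∑ i ∈ Finset.range a, (-1 : ℝ) ^ i * q ^ ((i : ℝ) * (b : ℝ) * (h : ℝ)) *
          hqGenocchi h (q ^ a) m ((b : ℝ) * x + (b : ℝ) * (i : ℝ) / (a : ℝ)) =
      (m : ℝ) * (1 + q ^ a) * (1 + q ^ b) / (1 - q) ^ (m - 1) *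
        ∑ k ∈ Finset.range m, ((m - 1).choose k : ℝ) * (-1 : ℝ) ^ k *
          q ^ ((a : ℝ) * (b : ℝ) * (k : ℝ) * x) *
          (1 + q ^ ((a : ℝ) * (b : ℝ) * ((h : ℝ) + (k : ℝ)))) /
          ((1 + q ^ ((a : ℝ) * ((h : ℝ) + (k : ℝ)))) *
           (1 + q ^ ((b : ℝ) * ((h : ℝ) + (k : ℝ))))) := by
  have hm0 : m ≠ 0 := by omega
  have hA0 : (0:ℝ) < (a:ℝ) := by exact_mod_cast ha
  have hAne : (a:ℝ) ≠ 0 := ne_of_gt hA0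
  have h1q : (1:ℝ) - q ≠ 0 := ne_of_gt (by linarith)
  have hqa1 : q ^ a < 1 := pow_lt_one₀ hq0.le hq1 (by omega)
  have h1qa : (1:ℝ) - q ^ a ≠ 0 := ne_of_gt (by nlinarith)
  have hap : ∀ y : ℝ, (q ^ a : ℝ) ^ y = q ^ ((a:ℝ) * y) := by
    intro y
    rw [← Real.rpow_natCast q a, ← Real.rpow_mul hq0.le]
  have hrpos : ∀ y : ℝ, (0:ℝ) < q ^ y := fun y => Real.rpow_pos_of_pos hq0 y
  -- abbreviations
  set A : ℝ := (a:ℝ)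
  set B : ℝ := (b:ℝ)
  set H : ℝ := (h:ℝ)
  -- per-term rewrite of the Genocchi polynomial expansion
  simp only [hqGenocchi, if_neg hm0, qnum]
  have hterm : ∀ i ∈ Finset.range a,
      (-1 : ℝ) ^ i * q ^ ((i : ℝ) * B * H) *
        ((m : ℝ) * (1 + q ^ a) / (1 - q ^ a) ^ (m - 1) *
          ∑ k ∈ Finset.range m, ((m - 1).choose k : ℝ) * (-1 : ℝ) ^ k *
            (q ^ a : ℝ) ^ ((k : ℝ) * (B * x + B * (i : ℝ) / A)) /
            (1 + (q ^ a : ℝ) ^ (H + (k : ℝ)))) =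
      (m : ℝ) * (1 + q ^ a) / (1 - q ^ a) ^ (m - 1) *
        ∑ k ∈ Finset.range m,
          (((m - 1).choose k : ℝ) * (-1 : ℝ) ^ k * q ^ (A * B * (k : ℝ) * x) /
            (1 + q ^ (A * (H + (k : ℝ))))) * (-(q ^ (B * (H + (k : ℝ))))) ^ i := by
    intro i _
    rw [show ∀ c D S : ℝ, c * (D * S) = D * (S * c) from fun c D S => by ring,
      Finset.sum_mul]
    congr 1
    refine Finset.sum_congr rfl fun k _ => ?_
    rw [hap, hap,
      show (-(q ^ (B * (H + (k:ℝ))))) ^ i = (-1:ℝ) ^ i * (q ^ (B * (H + (k:ℝ)))) ^ i from by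
        rw [neg_pow],
      ← Real.rpow_natCast (q ^ (B * (H + (k:ℝ)))) i, ← Real.rpow_mul hq0.le]
    have hd : (1:ℝ) + q ^ (A * (H + (k:ℝ))) ≠ 0 := by positivity
    have hexp : q ^ (A * ((k:ℝ) * (B * x + B * (i : ℝ) / A))) * q ^ ((i : ℝ) * B * H) =
        q ^ (A * B * (k:ℝ) * x) * q ^ (B * (H + (k:ℝ)) * (i:ℝ)) := by
      rw [← Real.rpow_add hq0, ← Real.rpow_add hq0]
      congr 1
      field_simp
      ring
    linear_combination (((m - 1).choose k : ℝ) * (-1 : ℝ) ^ k * (-1:ℝ) ^ i /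
      (1 + q ^ (A * (H + (k:ℝ))))) * hexp
  rw [Finset.sum_congr rfl hterm, ← Finset.mul_sum, Finset.sum_comm]
  -- geometric sum
  have hgeom : ∀ k : ℕ,
      ∑ i ∈ Finset.range a, (-(q ^ (B * (H + (k:ℝ))))) ^ i =
        (1 + q ^ (A * B * (H + (k:ℝ)))) / (1 + q ^ (B * (H + (k:ℝ)))) := by
    intro k
    have ht : (0:ℝ) < q ^ (B * (H + (k:ℝ))) := hrpos _
    have hne : -(q ^ (B * (H + (k:ℝ)))) ≠ 1 := by linarith
    rw [geom_sum_eq hne, hao.neg_pow, ← Real.rpow_natCast (q ^ (B * (H + (k:ℝ)))) a,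
      ← Real.rpow_mul hq0.le, show B * (H + (k:ℝ)) * A = A * B * (H + (k:ℝ)) by ring]
    rw [div_eq_div_iff (by linarith [hrpos (A * B * (H + (k:ℝ)))]) (by linarith)]
    ring
  have hsum : ∀ k ∈ Finset.range m,
      (∑ _i ∈ Finset.range a, (((m - 1).choose k : ℝ) * (-1 : ℝ) ^ k *
          q ^ (A * B * (k : ℝ) * x) / (1 + q ^ (A * (H + (k : ℝ))))) *
          (-(q ^ (B * (H + (k : ℝ))))) ^ _i) =
      ((m - 1).choose k : ℝ) * (-1 : ℝ) ^ k * q ^ (A * B * (k : ℝ) * x) *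
        (1 + q ^ (A * B * (H + (k : ℝ)))) /
        ((1 + q ^ (A * (H + (k : ℝ)))) * (1 + q ^ (B * (H + (k : ℝ))))) := by
    intro k _
    rw [← Finset.mul_sum, hgeom k, div_mul_div_comm]
  rw [Finset.sum_congr rfl hsum, show q ^ A = q ^ a from Real.rpow_natCast q a]
  have hp1 : ((1:ℝ) - q) ^ (m - 1) ≠ 0 := pow_ne_zero _ h1q
  have hp2 : ((1:ℝ) - q ^ a) ^ (m - 1) ≠ 0 := pow_ne_zero _ h1qa
  rw [div_pow]
  field_simp
  ring_nf
  exact Finset.sum_congr rfl fun k _ => by ring_nf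

theorem statement13 (q : ℝ) (hq0 : 0 < q) (hq1 : q < 1) (h : ℤ) (hh : 1 ≤ h)
    (x : ℝ) (hx : 0 < x) (m : ℕ) (hm : 1 ≤ m) (a b : ℕ) (ha : 0 < a) (hb : 0 < b)
    (hao : Odd a) (hbo : Odd b) :
    (1 + q ^ b) * (qnum q a) ^ (m - 1) *
        ∑ i ∈ Finset.range a, (-1 : ℝ) ^ i * q ^ ((i : ℝ) * (b : ℝ) * (h : ℝ)) *
          hqGenocchi h (q ^ a) m ((b : ℝ) * x + (b : ℝ) * (i : ℝ) / (a : ℝ)) =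
      (1 + q ^ a) * (qnum q b) ^ (m - 1) *
        ∑ i ∈ Finset.range b, (-1 : ℝ) ^ i * q ^ ((i : ℝ) * (a : ℝ) * (h : ℝ)) *
          hqGenocchi h (q ^ b) m ((a : ℝ) * x + (a : ℝ) * (i : ℝ) / (b : ℝ)) := by
  rw [key_s13 q hq0 hq1 h x m hm a b ha hao, key_s13 q hq0 hq1 h x m hm b a hb hbo,
    show (b:ℝ) * (a:ℝ) = (a:ℝ) * (b:ℝ) from mul_comm _ _]
  congr 1
  · ring
  · exact Finset.sum_congr rfl fun k _ => by ring
end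

section
/- Let q be a real number with 0 < q < 1, let h be an integer with h ≥ 1, let x be a real number with x > 0, let n be a natural number with n ≥ 1, and let a be an odd positive integer. Then G_n^{(h)}(x|q) = ([2]_q / [2]_{q^a}) · [a]_q^{n-1} · Σ_{i=0}^{a-1} (-1)^i · q^{ih} · G_n^{(h)}((x+i)/a | q^a). -/
theorem statement14 (q : ℝ) (hq0 : 0 < q) (hq1 : q < 1) (h : ℤ) (hh : 1 ≤ h)
    (x : ℝ) (hx : 0 < x) (n : ℕ) (hn : 1 ≤ n) (a : ℕ) (ha : 0 < a) (hao : Odd a) :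
    hqGenocchi h q n x =
      (1 + q) / (1 + q ^ a) * (qnum q a) ^ (n - 1) *
        ∑ i ∈ Finset.range a, (-1 : ℝ) ^ i * q ^ ((i : ℝ) * (h : ℝ)) *
          hqGenocchi h (q ^ a) n ((x + (i : ℝ)) / (a : ℝ)) := by
  have hn0 : n ≠ 0 := by omega
  have ha0 : (a:ℝ) ≠ 0 := Nat.cast_ne_zero.mpr ha.ne'
  have h1q : (1:ℝ) - q ≠ 0 := by nlinarith
  have hqa0 : (0:ℝ) < q ^ a := pow_pos hq0 a
  have hqa1 : q ^ a < 1 := pow_lt_one₀ hq0.le hq1 ha.ne'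
  have h1qa : (1:ℝ) - q ^ a ≠ 0 := by nlinarith
  have h1pqa : (1:ℝ) + q ^ a ≠ 0 := by nlinarith
  have hqaR : (q : ℝ) ^ a = q ^ (a : ℝ) := (Real.rpow_natCast q a).symm
  -- geometric sum
  have geom : ∀ t : ℝ, ∑ i ∈ Finset.range a, (-1:ℝ)^i * q ^ ((i:ℝ) * t)
      = (1 + q ^ ((a:ℝ)*t)) / (1 + q ^ t) := by
    intro t
    have hqt : (0:ℝ) < q ^ t := Real.rpow_pos_of_pos hq0 t
    have hr : -(q ^ t) ≠ 1 := by nlinarith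
    have hterm : ∀ i : ℕ, (-1:ℝ)^i * q ^ ((i:ℝ)*t) = (-(q^t))^i := by
      intro i
      rw [mul_comm (i:ℝ) t, Real.rpow_mul hq0.le, Real.rpow_natCast, neg_pow]
      ring
    rw [Finset.sum_congr rfl (fun i _ => hterm i), geom_sum_eq hr]
    have hpa : (-(q^t))^a = -(q ^ ((a:ℝ)*t)) := by
      rw [hao.neg_pow, mul_comm (a:ℝ) t, Real.rpow_mul hq0.le, Real.rpow_natCast]
    rw [hpa]
    rw [show -(q ^ ((a:ℝ)*t)) - 1 = -(1 + q ^ ((a:ℝ)*t)) by ring,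
        show -(q^t) - 1 = -(1 + q^t) by ring, neg_div_neg_eq]
  simp only [hqGenocchi, qnum, if_neg hn0]
  -- per-k inner identity
  have key : ∀ k : ℕ,
      ∑ i ∈ Finset.range a, (-1:ℝ)^i * q ^ ((i:ℝ)*(h:ℝ)) *
        (((n-1).choose k : ℝ) * (-1:ℝ)^k * (q^a) ^ ((k:ℝ) * ((x + (i:ℝ))/(a:ℝ))) /
          (1 + (q^a) ^ ((h:ℝ) + (k:ℝ))))
      = ((n-1).choose k : ℝ) * (-1:ℝ)^k * q ^ ((k:ℝ)*x) / (1 + q ^ ((h:ℝ)+(k:ℝ))) := by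
    intro k
    set t : ℝ := (h:ℝ) + (k:ℝ) with ht
    have hden : (1:ℝ) + q ^ ((a:ℝ)*t) ≠ 0 := by
      have := Real.rpow_pos_of_pos hq0 ((a:ℝ)*t); nlinarith
    have hden2 : (1:ℝ) + q ^ t ≠ 0 := by
      have := Real.rpow_pos_of_pos hq0 t; nlinarith
    have h1 : (q^a) ^ ((h:ℝ) + (k:ℝ)) = q ^ ((a:ℝ)*t) := by
      rw [hqaR, ← Real.rpow_mul hq0.le]
    have h2 : ∀ i : ℕ, (q^a) ^ ((k:ℝ) * ((x + (i:ℝ))/(a:ℝ))) = q ^ ((k:ℝ)*x) * q ^ ((k:ℝ)*(i:ℝ)) := by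
      intro i
      rw [hqaR, ← Real.rpow_mul hq0.le, ← Real.rpow_add hq0]
      congr 1
      field_simp
    have h3 : ∀ i : ℕ, (-1:ℝ)^i * q ^ ((i:ℝ)*(h:ℝ)) *
        (((n-1).choose k : ℝ) * (-1:ℝ)^k * (q^a) ^ ((k:ℝ) * ((x + (i:ℝ))/(a:ℝ))) /
          (1 + (q^a) ^ ((h:ℝ) + (k:ℝ))))
        = (((n-1).choose k : ℝ) * (-1:ℝ)^k * q ^ ((k:ℝ)*x) / (1 + q ^ ((a:ℝ)*t))) *
          ((-1:ℝ)^i * q ^ ((i:ℝ)*t)) := by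
      intro i
      rw [h1, h2 i]
      have h4 : q ^ ((i:ℝ)*t) = q ^ ((i:ℝ)*(h:ℝ)) * q ^ ((k:ℝ)*(i:ℝ)) := by
        rw [← Real.rpow_add hq0]; congr 1; rw [ht]; ring
      rw [h4]; ring
    rw [Finset.sum_congr rfl (fun i _ => h3 i), ← Finset.mul_sum, geom t]
    field_simp
  -- distribute the constant inside the i-sum
  have hC2 : ∀ i : ℕ, (-1:ℝ)^i * q ^ ((i:ℝ)*(h:ℝ)) *
      ((n:ℝ) * (1 + q^a) / (1 - q^a) ^ (n-1) *
        ∑ k ∈ Finset.range n, ((n-1).choose k : ℝ) * (-1:ℝ)^k *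
          (q^a) ^ ((k:ℝ) * ((x + (i:ℝ))/(a:ℝ))) / (1 + (q^a) ^ ((h:ℝ)+(k:ℝ))))
      = (n:ℝ) * (1 + q^a) / (1 - q^a) ^ (n-1) *
        ∑ k ∈ Finset.range n, (-1:ℝ)^i * q ^ ((i:ℝ)*(h:ℝ)) *
          (((n-1).choose k : ℝ) * (-1:ℝ)^k *
            (q^a) ^ ((k:ℝ) * ((x + (i:ℝ))/(a:ℝ))) / (1 + (q^a) ^ ((h:ℝ)+(k:ℝ)))) := by
    intro i
    rw [← Finset.mul_sum]
    have : ∀ k ∈ Finset.range n, ((n-1).choose k : ℝ) * (-1:ℝ)^k *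
          (q^a) ^ ((k:ℝ) * ((x + (i:ℝ))/(a:ℝ))) / (1 + (q^a) ^ ((h:ℝ)+(k:ℝ)))
        = ((n-1).choose k : ℝ) * (-1:ℝ)^k *
          (q^a) ^ ((k:ℝ) * ((x + (i:ℝ))/(a:ℝ))) / (1 + (q^a) ^ ((h:ℝ)+(k:ℝ))) :=
      fun _ _ => rfl
    ring
  rw [Finset.sum_congr rfl (fun i _ => hC2 i), ← Finset.mul_sum, Finset.sum_comm]
  rw [Finset.sum_congr rfl (fun k _ => key k)]
  rw [← hqaR, div_pow]
  have hpow1 : ((1:ℝ) - q) ^ (n-1) ≠ 0 := pow_ne_zero _ h1q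
  have hpow2 : ((1:ℝ) - q^a) ^ (n-1) ≠ 0 := pow_ne_zero _ h1qa
  field_simp
  ring_nf
  refine Finset.sum_congr rfl (fun k _ => ?_)
  rw [mul_comm x, add_comm (h:ℝ)]
end

section
/- Let q be a real number with q > 0 and q ≠ 1, let h be an integer with h ≥ 1, let x, y be real numbers, and let n be a natural number. Then G_n^{(h)}(x+y | q) = Σ_{j=0}^{n} binom(n,j) · q^{(j-1)y} · G_j^{(h)}(x|q) · [y]_q^{n-j}. -/
lemma keyNat (N k i : ℕ) (hki : k + i ≤ N) :
    (N + 1).choose (k + i + 1) * (k + i + 1) * ((k + i).choose k) =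
      (N + 1) * N.choose k * ((N - k).choose i) := by
  have h1 : (N + 1) * N.choose (k + i) = (N + 1).choose (k + i + 1) * (k + i + 1) :=
    Nat.add_one_mul_choose_eq N (k + i)
  have h2 : N.choose (k + i) * ((k + i).choose k) = N.choose k * ((N - k).choose (k + i - k)) :=
    Nat.choose_mul (Nat.le_add_right k i)
  rw [Nat.add_sub_cancel_left] at h2
  rw [← h1, Nat.mul_assoc, h2, Nat.mul_assoc]

lemma key_s15 (q : ℝ) (hq0 : 0 < q) (hq : (1 : ℝ) - q ≠ 0) (xr y D : ℝ) (N k : ℕ) (hk : k ≤ N) :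
    ∑ t ∈ Finset.range (N + 1),
      ((N + 1).choose (t + 1) : ℝ) * q ^ ((t : ℝ) * y) *
        (((t + 1 : ℕ) : ℝ) * (1 + q) / (1 - q) ^ t *
          ((t.choose k : ℝ) * (-1 : ℝ) ^ k * q ^ ((k : ℝ) * xr) / D)) *
        qnum q y ^ (N - t)
    = ((N + 1 : ℕ) : ℝ) * (1 + q) / (1 - q) ^ N *
        ((N.choose k : ℝ) * (-1 : ℝ) ^ k * q ^ ((k : ℝ) * (xr + y)) / D) := by
  set m := N - k with hm
  have hsubset : Finset.Ico k (N + 1) ⊆ Finset.range (N + 1) := by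
    intro t ht
    simp only [Finset.mem_Ico] at ht
    simp only [Finset.mem_range]
    omega
  rw [← Finset.sum_subset hsubset (by
    intro t ht hnt
    simp only [Finset.mem_Ico, Finset.mem_range] at ht hnt
    have : t < k := by omega
    rw [Nat.choose_eq_zero_of_lt this]
    simp)]
  rw [Finset.sum_Ico_eq_sum_range]
  have hrange : N + 1 - k = m + 1 := by omega
  rw [hrange]
  set A : ℝ := ((N + 1 : ℕ) : ℝ) * (N.choose k : ℝ) *
      ((1 + q) * ((-1 : ℝ) ^ k * (q ^ ((k : ℝ) * xr) * q ^ ((k : ℝ) * y)))) /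
      ((1 - q) ^ k * D) with hA
  have hterm : ∀ i ∈ Finset.range (m + 1),
      ((N + 1).choose (k + i + 1) : ℝ) * q ^ (((k + i : ℕ) : ℝ) * y) *
        (((k + i + 1 : ℕ) : ℝ) * (1 + q) / (1 - q) ^ (k + i) *
          (((k + i).choose k : ℝ) * (-1 : ℝ) ^ k * q ^ ((k : ℝ) * xr) / D)) *
        qnum q y ^ (N - (k + i))
      = A * ((q ^ y / (1 - q)) ^ i * qnum q y ^ (m - i) * (m.choose i : ℝ)) := by
    intro i hi
    have hki : k + i ≤ N := by
      simp only [Finset.mem_range] at hi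
      omega
    have hc : (((N + 1).choose (k + i + 1) : ℕ) : ℝ) * ((k + i + 1 : ℕ) : ℝ) *
        (((k + i).choose k : ℕ) : ℝ) =
        ((N + 1 : ℕ) : ℝ) * ((N.choose k : ℕ) : ℝ) * ((m.choose i : ℕ) : ℝ) := by
      rw [hm]
      exact_mod_cast congrArg (Nat.cast : ℕ → ℝ) (keyNat N k i hki)
    have hr1 : q ^ (((k + i : ℕ) : ℝ) * y) = q ^ ((k : ℝ) * y) * (q ^ y) ^ i := by
      have hcast : ((k + i : ℕ) : ℝ) = (k : ℝ) + (i : ℝ) := by push_cast; ring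
      rw [hcast, add_mul, Real.rpow_add hq0, mul_comm (i : ℝ) y,
        Real.rpow_mul hq0.le y (i : ℝ), Real.rpow_natCast]
    have hsub2 : N - (k + i) = m - i := by omega
    rw [hsub2, hr1, pow_add, hA]
    push_cast at hc ⊢
    linear_combination ((1 + q) * ((-1 : ℝ) ^ k * (q ^ ((k : ℝ) * xr) * (q ^ ((k : ℝ) * y) *
      (q ^ y) ^ i))) * qnum q y ^ (m - i) / ((1 - q) ^ k * (1 - q) ^ i * D)) * hc
  rw [Finset.sum_congr rfl hterm, ← Finset.mul_sum, ← add_pow]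
  have hsum : q ^ y / (1 - q) + qnum q y = 1 / (1 - q) := by
    rw [qnum, ← add_div]
    congr 1
    ring
  rw [hsum, hA]
  have hN : k + m = N := by omega
  rw [← hN, pow_add, mul_add (k : ℝ) xr y, Real.rpow_add hq0]
  ring

theorem statement15 (q : ℝ) (hq0 : 0 < q) (hq1 : q ≠ 1) (h : ℤ) (hh : 1 ≤ h)
    (x y : ℝ) (n : ℕ) :
    hqGenocchi h q n (x + y) =
      ∑ j ∈ Finset.range (n + 1), (n.choose j : ℝ) * q ^ (((j : ℝ) - 1) * y) *
        hqGenocchi h q j x * (qnum q y) ^ (n - j) := by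
  have hq : (1 : ℝ) - q ≠ 0 := sub_ne_zero.mpr (Ne.symm hq1)
  cases n with
  | zero => simp [hqGenocchi]
  | succ N =>
    rw [Finset.sum_range_succ']
    have h0 : hqGenocchi h q 0 x = 0 := by simp [hqGenocchi]
    rw [h0, mul_zero, zero_mul, add_zero]
    simp only [hqGenocchi, Nat.succ_ne_zero, if_false, Nat.add_sub_cancel]
    have expand : ∀ t ∈ Finset.range (N + 1),
        (((N + 1).choose (t + 1) : ℝ) * q ^ ((((t + 1 : ℕ) : ℝ) - 1) * y) *
          (((t + 1 : ℕ) : ℝ) * (1 + q) / (1 - q) ^ t *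
            ∑ k ∈ Finset.range (t + 1), (t.choose k : ℝ) * (-1 : ℝ) ^ k *
              q ^ ((k : ℝ) * x) / (1 + q ^ ((h : ℝ) + (k : ℝ)))) *
          qnum q y ^ (N + 1 - (t + 1)))
        = ∑ k ∈ Finset.range (N + 1),
            ((N + 1).choose (t + 1) : ℝ) * q ^ ((t : ℝ) * y) *
              (((t + 1 : ℕ) : ℝ) * (1 + q) / (1 - q) ^ t *
                ((t.choose k : ℝ) * (-1 : ℝ) ^ k * q ^ ((k : ℝ) * x) /
                  (1 + q ^ ((h : ℝ) + (k : ℝ))))) *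
              qnum q y ^ (N - t) := by
      intro t ht
      have he : ((t + 1 : ℕ) : ℝ) - 1 = (t : ℝ) := by push_cast; ring
      have hs : N + 1 - (t + 1) = N - t := by omega
      rw [he, hs]
      rw [show (∑ k ∈ Finset.range (t + 1), (t.choose k : ℝ) * (-1 : ℝ) ^ k *
              q ^ ((k : ℝ) * x) / (1 + q ^ ((h : ℝ) + (k : ℝ))))
          = ∑ k ∈ Finset.range (N + 1), (t.choose k : ℝ) * (-1 : ℝ) ^ k *
              q ^ ((k : ℝ) * x) / (1 + q ^ ((h : ℝ) + (k : ℝ))) from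
        Finset.sum_subset
          (by intro a ha
              simp only [Finset.mem_range] at ha ht ⊢
              omega)
          (by intro a ha hna
              simp only [Finset.mem_range] at ha hna
              rw [Nat.choose_eq_zero_of_lt (by omega)]
              simp)]
      rw [Finset.mul_sum, Finset.mul_sum, Finset.sum_mul]
    rw [Finset.sum_congr rfl expand, Finset.sum_comm, Finset.mul_sum]
    refine Finset.sum_congr rfl fun k hk => ?_
    have hk' : k ≤ N := by simp only [Finset.mem_range] at hk; omega
    exact (key_s15 q hq0 hq x y (1 + q ^ ((h : ℝ) + (k : ℝ))) N k hk').symm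
end
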